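/- arXiv:2504.13108 — 7 statements merged into one kernel-verified Lean document; each statement's English description precedes it below -/
import Mathlib

section
/- The map ι sending a signed permutation w of size n to the permutation of S_{2n} order-isomorphic to the word w(-n) w(-n+1) ... w(-1) w(1) ... w(n) is a bijection from the group of signed permutations of size n onto the set of permutations of S_{2n} that are invariant under reverse-complement. -/
/-- The set of valid positions/values for a signed permutation of size `n`:
`{±1, …, ±n}`. -/
def windowSet (n : ℕ) : Set ℤ := {x : ℤ | 1 ≤ |x| ∧ |x| ≤ (n : ℤ)}

/-- `w : ℤ → ℤ` represents a signed permutation of size `n`: it is odd,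
bijective on `{±1,…,±n}`, and (as a normalization) the identity elsewhere. -/
def IsSignedPerm (n : ℕ) (w : ℤ → ℤ) : Prop :=
  (∀ x : ℤ, w (-x) = - w x) ∧ Set.BijOn w (windowSet n) (windowSet n) ∧
  ∀ x : ℤ, x ∉ windowSet n → w x = x

/-- `u ∈ S_m` is invariant under reverse-complement. -/
def RCInvariant {m : ℕ} (u : Equiv.Perm (Fin m)) : Prop :=
  ∀ i, u i.rev = (u i).rev

/-- The index in `{±1,…,±n}` corresponding to position `a` in the
mirror notation `w(-n) ⋯ w(-1) w(1) ⋯ w(n)`. -/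
def mirrorIdx (n : ℕ) (a : Fin (2 * n)) : ℤ :=
  if (a : ℕ) < n then (a : ℤ) - n else (a : ℤ) - n + 1

/-- `u ∈ S_{2n}` is order-isomorphic to the mirror notation of `w`,
i.e. `u = ι(w)`. -/
def IotaSpec (n : ℕ) (w : ℤ → ℤ) (u : Equiv.Perm (Fin (2 * n))) : Prop :=
  ∀ a b, u a < u b ↔ w (mirrorIdx n a) < w (mirrorIdx n b)

-- auxiliary lemmas

lemma mirror_mem (n : ℕ) (a : Fin (2 * n)) : mirrorIdx n a ∈ windowSet n := by
  have := a.isLt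
  unfold mirrorIdx windowSet
  simp only [Set.mem_setOf_eq, le_abs, abs_le]
  split <;> omega

lemma mirror_lt_iff (n : ℕ) (a b : Fin (2 * n)) :
    mirrorIdx n a < mirrorIdx n b ↔ a < b := by
  have := a.isLt; have := b.isLt
  unfold mirrorIdx
  rw [Fin.lt_iff_val_lt_val]
  split <;> split <;> omega

lemma mirror_inj (n : ℕ) : Function.Injective (mirrorIdx n) := by
  intro a b h
  rcases lt_trichotomy a b with hab | hab | hab
  · exact absurd ((mirror_lt_iff n a b).2 hab) (by omega)
  · exact hab
  · exact absurd ((mirror_lt_iff n b a).2 hab) (by omega)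

lemma mirror_surj (n : ℕ) {x : ℤ} (hx : x ∈ windowSet n) :
    ∃ a : Fin (2 * n), mirrorIdx n a = x := by
  obtain ⟨h1, h2⟩ := hx
  rcases le_or_gt x 0 with hx0 | hx0
  · rw [abs_of_nonpos (by omega)] at h1 h2
    refine ⟨⟨(x + n).toNat, by omega⟩, ?_⟩
    unfold mirrorIdx
    simp only [Fin.val_mk]
    rw [if_pos (by omega)]
    omega
  · rw [abs_of_pos hx0] at h1 h2
    refine ⟨⟨(x + n - 1).toNat, by omega⟩, ?_⟩
    unfold mirrorIdx
    simp only [Fin.val_mk]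
    rw [if_neg (by omega)]
    omega

lemma mirror_rev (n : ℕ) (a : Fin (2 * n)) :
    mirrorIdx n a.rev = - mirrorIdx n a := by
  have := a.isLt
  have hrev : (a.rev : ℕ) = 2 * n - (a + 1) := Fin.val_rev a
  unfold mirrorIdx
  rw [hrev]
  split <;> split <;> push_cast <;> omega

/-- rigidity: two bijections of `Fin m` with the same relative order are equal. -/
lemma rigid {m : ℕ} {f g : Fin m → Fin m} (hf : Function.Bijective f)
    (hg : Function.Bijective g) (h : ∀ a b, f a < f b ↔ g a < g b) : f = g := by
  let e := Equiv.ofBijective f hf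
  have hmono : StrictMono (g ∘ e.symm) := by
    intro x y hxy
    have hx : f (e.symm x) = x := e.apply_symm_apply x
    have hy : f (e.symm y) = y := e.apply_symm_apply y
    exact (h _ _).1 (by rw [hx, hy]; exact hxy)
  have hid : StrictMono (id : Fin m → Fin m) := strictMono_id
  have hrange : Set.range (g ∘ e.symm) = Set.range (id : Fin m → Fin m) := by
    rw [Set.range_comp, Set.range_id, e.symm.range_eq_univ, Set.image_univ,
      hg.surjective.range_eq]
  have h2 := (hmono.range_inj hid).1 hrange
  funext a
  have := congrFun h2 (e a)
  simpa [e] using this.symm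

lemma iota_inj (n : ℕ) (w : ℤ → ℤ) (hw : IsSignedPerm n w) :
    Function.Injective (fun a : Fin (2 * n) => w (mirrorIdx n a)) := by
  intro a b h
  exact mirror_inj n (hw.2.1.injOn (mirror_mem n a) (mirror_mem n b) h)

noncomputable def iotaSet (n : ℕ) (w : ℤ → ℤ) : Finset ℤ :=
  Finset.univ.image (fun a : Fin (2 * n) => w (mirrorIdx n a))

lemma iotaSet_card (n : ℕ) (w : ℤ → ℤ) (hw : IsSignedPerm n w) :
    (iotaSet n w).card = 2 * n := by
  rw [iotaSet, Finset.card_image_of_injective _ (iota_inj n w hw), Finset.card_univ,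
    Fintype.card_fin]

lemma iotaSet_mem (n : ℕ) (w : ℤ → ℤ) (a : Fin (2 * n)) :
    w (mirrorIdx n a) ∈ iotaSet n w :=
  Finset.mem_image_of_mem _ (Finset.mem_univ a)

lemma iotaFun_bij (n : ℕ) (w : ℤ → ℤ) (hw : IsSignedPerm n w) :
    Function.Bijective (fun a : Fin (2 * n) =>
      (⟨w (mirrorIdx n a), iotaSet_mem n w a⟩ : iotaSet n w)) := by
  rw [Fintype.bijective_iff_injective_and_card]
  refine ⟨fun a b h => iota_inj n w hw (Subtype.ext_iff.1 h), ?_⟩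
  rw [Fintype.card_coe, iotaSet_card n w hw, Fintype.card_fin]

noncomputable def mkIota (n : ℕ) (w : ℤ → ℤ) (hw : IsSignedPerm n w) :
    Equiv.Perm (Fin (2 * n)) :=
  (Equiv.ofBijective _ (iotaFun_bij n w hw)).trans
    ((iotaSet n w).orderIsoOfFin (iotaSet_card n w hw)).symm.toEquiv

lemma mkIota_spec (n : ℕ) (w : ℤ → ℤ) (hw : IsSignedPerm n w) :
    IotaSpec n w (mkIota n w hw) := by
  intro a b
  simp only [mkIota, Equiv.trans_apply, RelIso.coe_fn_toEquiv, Equiv.ofBijective_apply]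
  rw [OrderIso.lt_iff_lt]
  exact Subtype.mk_lt_mk

-- uniqueness of the permutation satisfying IotaSpec
lemma iota_unique {n : ℕ} {w : ℤ → ℤ} {u v : Equiv.Perm (Fin (2 * n))}
    (hu : IotaSpec n w u) (hv : IotaSpec n w v) : u = v := by
  have := rigid u.bijective v.bijective (fun a b => (hu a b).trans (hv a b).symm)
  exact Equiv.ext fun a => congrFun this a

lemma neg_mem_window {n : ℕ} {x : ℤ} (hx : x ∈ windowSet n) : -x ∈ windowSet n := by
  obtain ⟨h1, h2⟩ := hx; exact ⟨by rwa [abs_neg], by rwa [abs_neg]⟩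

/-- The map `ι`, sending a signed permutation `w` of size `n` to the
permutation of `S_{2n}` order-isomorphic to the mirror notation of `w`,
is a bijection from signed permutations of size `n` onto the
rc-invariant elements of `S_{2n}`. -/
theorem stmt0 (n : ℕ) :
    ∃ ι : {w : ℤ → ℤ // IsSignedPerm n w} → Equiv.Perm (Fin (2 * n)),
      (∀ w, IotaSpec n w.1 (ι w)) ∧
      Function.Injective ι ∧
      (∀ w, RCInvariant (ι w)) ∧
      (∀ u : Equiv.Perm (Fin (2 * n)), RCInvariant u → ∃ w, ι w = u) := by
  classical
  refine ⟨fun w => mkIota n w.1 w.2, fun w => mkIota_spec n w.1 w.2, ?_, ?_, ?_⟩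
  · -- injectivity
    intro w w' h
    have hs := mkIota_spec n w.1 w.2
    have hs' := mkIota_spec n w'.1 w'.2
    have heq : mkIota n w.1 w.2 = mkIota n w'.1 w'.2 := h
    rw [heq] at hs
    have horder : ∀ a b, w.1 (mirrorIdx n a) < w.1 (mirrorIdx n b) ↔
        w'.1 (mirrorIdx n a) < w'.1 (mirrorIdx n b) := by
      intro a b; rw [← hs a b, ← hs' a b]
    -- transfer to Fin 2n via mirror equiv
    obtain ⟨hodd, hbij, hout⟩ := w.2
    obtain ⟨hodd', hbij', hout'⟩ := w'.2
    have key : ∀ x ∈ windowSet n, w.1 x = w'.1 x := by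
      -- define f g : Fin 2n → Fin 2n
      have hsurj : ∀ y ∈ windowSet n, ∃ a : Fin (2*n), w.1 (mirrorIdx n a) = y := by
        intro y hy
        obtain ⟨x, hx, hxy⟩ := hbij.surjOn hy
        obtain ⟨a, ha⟩ := mirror_surj n hx
        exact ⟨a, by rw [ha]; exact hxy⟩
      have hsurj' : ∀ y ∈ windowSet n, ∃ a : Fin (2*n), w'.1 (mirrorIdx n a) = y := by
        intro y hy
        obtain ⟨x, hx, hxy⟩ := hbij'.surjOn hy
        obtain ⟨a, ha⟩ := mirror_surj n hx
        exact ⟨a, by rw [ha]; exact hxy⟩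
      have hmem : ∀ a : Fin (2*n), w.1 (mirrorIdx n a) ∈ windowSet n :=
        fun a => hbij.mapsTo (mirror_mem n a)
      have hmem' : ∀ a : Fin (2*n), w'.1 (mirrorIdx n a) ∈ windowSet n :=
        fun a => hbij'.mapsTo (mirror_mem n a)
      let f : Fin (2*n) → Fin (2*n) := fun a => (mirror_surj n (hmem a)).choose
      let g : Fin (2*n) → Fin (2*n) := fun a => (mirror_surj n (hmem' a)).choose
      have hf : ∀ a, mirrorIdx n (f a) = w.1 (mirrorIdx n a) :=
        fun a => (mirror_surj n (hmem a)).choose_spec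
      have hg : ∀ a, mirrorIdx n (g a) = w'.1 (mirrorIdx n a) :=
        fun a => (mirror_surj n (hmem' a)).choose_spec
      have hfinj : Function.Injective f := by
        intro a b hab
        apply mirror_inj n
        apply hbij.injOn (mirror_mem n a) (mirror_mem n b)
        rw [← hf a, ← hf b, hab]
      have hginj : Function.Injective g := by
        intro a b hab
        apply mirror_inj n
        apply hbij'.injOn (mirror_mem n a) (mirror_mem n b)
        rw [← hg a, ← hg b, hab]
      have hfbij : Function.Bijective f := (Finite.injective_iff_bijective).1 hfinj
      have hgbij : Function.Bijective g := (Finite.injective_iff_bijective).1 hginj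
      have heq : f = g := by
        apply rigid hfbij hgbij
        intro a b
        rw [← mirror_lt_iff n (f a) (f b), ← mirror_lt_iff n (g a) (g b),
          hf a, hf b, hg a, hg b]
        exact horder a b
      intro x hx
      obtain ⟨a, ha⟩ := mirror_surj n hx
      rw [← ha, ← hf a, ← hg a, heq]
    apply Subtype.ext
    funext x
    by_cases hx : x ∈ windowSet n
    · exact key x hx
    · rw [hout x hx, hout' x hx]
  · -- RC invariance
    intro w
    set u := mkIota n w.1 w.2 with hu
    have hs := mkIota_spec n w.1 w.2
    obtain ⟨hodd, hbij, hout⟩ := w.2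
    intro i
    have : (fun a : Fin (2*n) => u a.rev) = (fun a => (u a).rev) := by
      apply rigid
      · exact (Equiv.toEmbedding u).injective.comp (Fin.rev_injective) |>.bijective_of_finite
      · exact (Fin.rev_injective.comp u.injective).bijective_of_finite
      intro a b
      rw [hs a.rev b.rev, mirror_rev, mirror_rev, hodd, hodd, neg_lt_neg_iff,
        Fin.rev_lt_rev, ← hs b a]
    exact congrFun this i
  · -- surjectivity
    intro u hrc
    have hmembij : Function.Bijective
        (fun a : Fin (2*n) => (⟨mirrorIdx n a, mirror_mem n a⟩ : windowSet n)) := by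
      constructor
      · intro a b h; exact mirror_inj n (Subtype.ext_iff.1 h)
      · rintro ⟨x, hx⟩
        obtain ⟨a, ha⟩ := mirror_surj n hx
        exact ⟨a, Subtype.ext ha⟩
    let mE : Fin (2*n) ≃ windowSet n := Equiv.ofBijective _ hmembij
    have hmE : ∀ a, (mE a : ℤ) = mirrorIdx n a := fun a => rfl
    have hmEsymm : ∀ a : Fin (2*n), ∀ h, mE.symm ⟨mirrorIdx n a, h⟩ = a := by
      intro a h
      apply mE.injective
      rw [mE.apply_symm_apply]
      rfl
    let w : ℤ → ℤ := fun x =>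
      if h : x ∈ windowSet n then mirrorIdx n (u (mE.symm ⟨x, h⟩)) else x
    have hwin : ∀ x (h : x ∈ windowSet n), w x = mirrorIdx n (u (mE.symm ⟨x, h⟩)) :=
      fun x h => dif_pos h
    have hwm : ∀ a : Fin (2*n), w (mirrorIdx n a) = mirrorIdx n (u a) := by
      intro a
      rw [hwin _ (mirror_mem n a), hmEsymm]
    have hnot : ∀ x, x ∉ windowSet n → w x = x := fun x h => dif_neg h
    have hwindow_neg : ∀ x : ℤ, x ∉ windowSet n → -x ∉ windowSet n := by
      intro x hx hnx
      exact hx (by simpa using neg_mem_window hnx)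
    have hodd : ∀ x : ℤ, w (-x) = - w x := by
      intro x
      by_cases hx : x ∈ windowSet n
      · obtain ⟨a, ha⟩ := mirror_surj n hx
        subst ha
        rw [← mirror_rev, hwm, hwm, hrc, mirror_rev]
      · rw [hnot x hx, hnot _ (hwindow_neg x hx)]
    have hbij : Set.BijOn w (windowSet n) (windowSet n) := by
      refine ⟨?_, ?_, ?_⟩
      · intro x hx
        rw [hwin x hx]
        exact mirror_mem n _
      · intro x hx y hy hxy
        rw [hwin x hx, hwin y hy] at hxy
        have h1 := mirror_inj n hxy
        have h2 := u.injective h1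
        have h3 := mE.symm.injective h2
        exact Subtype.ext_iff.1 h3
      · intro y hy
        obtain ⟨b, hb⟩ := mirror_surj n hy
        obtain ⟨a, ha⟩ : ∃ a, u a = b := ⟨u.symm b, u.apply_symm_apply b⟩
        exact ⟨mirrorIdx n a, mirror_mem n a, by rw [hwm, ha, hb]⟩
    have hsp : IsSignedPerm n w := ⟨hodd, hbij, hnot⟩
    refine ⟨⟨w, hsp⟩, ?_⟩
    apply iota_unique (mkIota_spec n w hsp)
    intro a b
    rw [hwm, hwm, mirror_lt_iff]
end

section
/- There is no set P of (unsigned) permutation patterns such that the set of signed permutations whose window notation contains only positive values equals the set of signed permutations globally avoiding all patterns in P. -/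
/-- Global containment of an (unsigned) pattern `p ∈ S_k` in a signed
permutation of size `n`: an occurrence may use positive and negative indices. -/
def GContains (n : ℕ) (w : ℤ → ℤ) {k : ℕ} (p : Equiv.Perm (Fin k)) : Prop :=
  ∃ i : Fin k → ℤ, StrictMono i ∧ (∀ a, i a ∈ windowSet n) ∧
    ∀ a b, w (i a) < w (i b) ↔ p a < p b

lemma mem_ws1 (x : ℤ) : x ∈ windowSet 1 ↔ x = 1 ∨ x = -1 := by
  simp only [windowSet, Set.mem_setOf_eq, Nat.cast_one]
  rcases abs_cases x with ⟨he, _⟩ | ⟨he, _⟩ <;> rw [he] <;> omega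

lemma mem_ws2 (x : ℤ) : x ∈ windowSet 2 ↔ x = 1 ∨ x = -1 ∨ x = 2 ∨ x = -2 := by
  simp only [windowSet, Set.mem_setOf_eq, Nat.cast_ofNat]
  rcases abs_cases x with ⟨he, _⟩ | ⟨he, _⟩ <;> rw [he] <;> omega

/-- The negation signed permutation on `{±1}`. -/
def wneg : ℤ → ℤ := fun x => if x = 1 then -1 else if x = -1 then 1 else x

/-- The signed permutation with window notation `(2,1)`. -/
def w2 : ℤ → ℤ := fun x =>
  if x = 1 then 2 else if x = -1 then -2 else if x = 2 then 1 else if x = -2 then -1 else x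

lemma sp_wneg : IsSignedPerm 1 wneg := by
  refine ⟨?_, ⟨?_, ?_, ?_⟩, ?_⟩
  · intro x; unfold wneg; split_ifs <;> omega
  · intro x hx; rw [mem_ws1] at hx ⊢; rcases hx with rfl | rfl <;> simp [wneg]
  · intro x hx y hy h
    rw [mem_ws1] at hx hy
    rcases hx with rfl | rfl <;> rcases hy with rfl | rfl <;> simp_all [wneg]
  · intro y hy; rw [mem_ws1] at hy
    rcases hy with rfl | rfl
    · exact ⟨-1, (mem_ws1 _).mpr (Or.inr rfl), by simp [wneg]⟩
    · exact ⟨1, (mem_ws1 _).mpr (Or.inl rfl), by simp [wneg]⟩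
  · intro x hx; rw [mem_ws1] at hx; push_neg at hx
    simp [wneg, hx.1, hx.2]

lemma sp_w2 : IsSignedPerm 2 w2 := by
  refine ⟨?_, ⟨?_, ?_, ?_⟩, ?_⟩
  · intro x; unfold w2; split_ifs <;> omega
  · intro x hx; rw [mem_ws2] at hx ⊢
    rcases hx with rfl | rfl | rfl | rfl <;> simp [w2]
  · intro x hx y hy h
    rw [mem_ws2] at hx hy
    rcases hx with rfl | rfl | rfl | rfl <;> rcases hy with rfl | rfl | rfl | rfl <;>
      simp_all [w2]
  · intro y hy; rw [mem_ws2] at hy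
    rcases hy with rfl | rfl | rfl | rfl
    · exact ⟨2, (mem_ws2 _).mpr (by norm_num), by norm_num [w2]⟩
    · exact ⟨-2, (mem_ws2 _).mpr (by norm_num), by norm_num [w2]⟩
    · exact ⟨1, (mem_ws2 _).mpr (by norm_num), by norm_num [w2]⟩
    · exact ⟨-1, (mem_ws2 _).mpr (by norm_num), by norm_num [w2]⟩
  · intro x hx; rw [mem_ws2] at hx; push_neg at hx
    obtain ⟨h1, h2, h3, h4⟩ := hx
    simp [w2, h1, h2, h3, h4]

/-- Any pattern globally contained in the negation on `{±1}` is globally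
contained in the all-positive window `(2,1)` on `{±1,±2}`. -/
lemma transfer {k : ℕ} (p : Equiv.Perm (Fin k)) (h : GContains 1 wneg p) :
    GContains 2 w2 p := by
  obtain ⟨i, hmono, hmem, hcmp⟩ := h
  refine ⟨fun a => if i a = -1 then 1 else 2, ?_, ?_, ?_⟩
  · intro a b hab
    have ha := (mem_ws1 _).mp (hmem a)
    have hb := (mem_ws1 _).mp (hmem b)
    have := hmono hab
    rcases ha with ha | ha <;> rcases hb with hb | hb <;> simp [ha, hb] at this ⊢ <;> omega
  · intro a; rw [mem_ws2]; by_cases h : i a = -1 <;> simp [h]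
  · intro a b
    rw [← hcmp a b]
    have ha := (mem_ws1 _).mp (hmem a)
    have hb := (mem_ws1 _).mp (hmem b)
    rcases ha with ha | ha <;> rcases hb with hb | hb <;> norm_num [ha, hb, wneg, w2]

/-- There is no set `P` of unsigned patterns such that the signed
permutations whose window notation contains only positive values are exactly
the signed permutations globally avoiding every pattern in `P`. -/
theorem stmt5 :
    ¬ ∃ P : Set ((k : ℕ) × Equiv.Perm (Fin k)),
      ∀ (n : ℕ) (w : ℤ → ℤ), IsSignedPerm n w →
        ((∀ x : ℤ, 1 ≤ x → x ≤ (n : ℤ) → 0 < w x) ↔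
          ∀ q ∈ P, ¬ GContains n w q.2) := by
  rintro ⟨P, hP⟩
  -- wneg is not all-positive
  have hneg : ¬ (∀ x : ℤ, 1 ≤ x → x ≤ (1 : ℕ) → 0 < wneg x) := by
    intro h
    have := h 1 le_rfl (by norm_num)
    simp [wneg] at this
  -- so wneg contains some q ∈ P
  have h1 := (hP 1 wneg sp_wneg).not.mp hneg
  push_neg at h1
  obtain ⟨q, hqP, hqc⟩ := h1
  -- w2 is all-positive, hence avoids all of P
  have hpos : ∀ x : ℤ, 1 ≤ x → x ≤ ((2 : ℕ) : ℤ) → 0 < w2 x := by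
    intro x h1x h2x
    interval_cases x <;> norm_num [w2]
  have h2 := (hP 2 w2 sp_w2).mp hpos q hqP
  exact h2 (transfer q.2 hqc)
end

section
/- The number of signed permutations of size n that globally avoid the pattern 132 equals 2^n. -/
def p132 : Equiv.Perm (Fin 3) := Equiv.swap 1 2
def p213 : Equiv.Perm (Fin 3) := Equiv.swap 0 1
def p2143 : Equiv.Perm (Fin 4) := Equiv.swap 0 1 * Equiv.swap 2 3

namespace Stmt8

/-- linearization of the window: `ι` sends window positions to `1..2n`. -/
def iot (n : ℕ) (x : ℤ) : ℤ := if 0 < x then x + n else x + n + 1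

/-- inverse linearization. -/
def ee (n : ℕ) (k : ℤ) : ℤ := if k ≤ n then k - n - 1 else k - n

lemma mem_window_iff (n : ℕ) (x : ℤ) :
    x ∈ windowSet n ↔ (1 ≤ x ∧ x ≤ (n:ℤ)) ∨ (-(n:ℤ) ≤ x ∧ x ≤ -1) := by
  simp only [windowSet, Set.mem_setOf_eq, Int.abs_eq_natAbs]
  omega

lemma neg_mem_window {n : ℕ} {x : ℤ} (h : x ∈ windowSet n) : -x ∈ windowSet n := by
  rw [mem_window_iff] at *; omega

lemma ee_mem {n : ℕ} {k : ℤ} (h1 : 1 ≤ k) (h2 : k ≤ 2*n) : ee n k ∈ windowSet n := by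
  rw [mem_window_iff]; unfold ee; split <;> omega

lemma iot_mem {n : ℕ} {x : ℤ} (h : x ∈ windowSet n) : 1 ≤ iot n x ∧ iot n x ≤ 2*n := by
  rw [mem_window_iff] at h; unfold iot; split <;> omega

lemma ee_iot {n : ℕ} {x : ℤ} (h : x ∈ windowSet n) : ee n (iot n x) = x := by
  rw [mem_window_iff] at h; unfold ee iot; split <;> split <;> omega

lemma iot_ee {n : ℕ} {k : ℤ} (h1 : 1 ≤ k) (h2 : k ≤ 2*n) : iot n (ee n k) = k := by
  unfold ee iot; split <;> split <;> omega

lemma ee_lt_ee {n : ℕ} {k l : ℤ} (hk : 1 ≤ k) (hl : l ≤ 2*n) (h : k < l) :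
    ee n k < ee n l := by
  unfold ee; split <;> split <;> omega

lemma iot_lt_iot {n : ℕ} {x y : ℤ} (hx : x ∈ windowSet n) (hy : y ∈ windowSet n)
    (h : x < y) : iot n x < iot n y := by
  rw [mem_window_iff] at hx hy; unfold iot; split <;> split <;> omega

lemma iot_neg {n : ℕ} {x : ℤ} (h : x ∈ windowSet n) :
    iot n (-x) = 2*n + 1 - iot n x := by
  rw [mem_window_iff] at h; unfold iot; split <;> split <;> omega

lemma ee_neg {n : ℕ} {k : ℤ} (h1 : 1 ≤ k) (h2 : k ≤ 2*n) :
    ee n (2*n + 1 - k) = - ee n k := by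
  unfold ee; split <;> split <;> omega


/-! ### linearized permutation -/

def gl (n : ℕ) (w : ℤ → ℤ) (k : ℤ) : ℤ := iot n (w (ee n k))

section SP
variable {n : ℕ} {w : ℤ → ℤ} (hw : IsSignedPerm n w)
include hw

lemma w_mem {x : ℤ} (hx : x ∈ windowSet n) : w x ∈ windowSet n := hw.2.1.1 hx

lemma gl_mem {k : ℤ} (h1 : 1 ≤ k) (h2 : k ≤ 2*n) :
    1 ≤ gl n w k ∧ gl n w k ≤ 2*n := iot_mem (w_mem hw (ee_mem h1 h2))

lemma w_eq_ee_gl {x : ℤ} (hx : x ∈ windowSet n) : w x = ee n (gl n w (iot n x)) := by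
  unfold gl; rw [ee_iot hx, ee_iot (w_mem hw hx)]

lemma gl_inj {k l : ℤ} (hk1 : 1 ≤ k) (hk2 : k ≤ 2*n) (hl1 : 1 ≤ l) (hl2 : l ≤ 2*n)
    (h : gl n w k = gl n w l) : k = l := by
  unfold gl at h
  have h' : w (ee n k) = w (ee n l) := by
    have := congrArg (ee n) h
    rwa [ee_iot (w_mem hw (ee_mem hk1 hk2)), ee_iot (w_mem hw (ee_mem hl1 hl2))] at this
  have := hw.2.1.2.1 (ee_mem hk1 hk2) (ee_mem hl1 hl2) h'
  have := congrArg (iot n) this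
  rwa [iot_ee hk1 hk2, iot_ee hl1 hl2] at this

lemma gl_surj {m : ℤ} (h1 : 1 ≤ m) (h2 : m ≤ 2*n) :
    ∃ k : ℤ, 1 ≤ k ∧ k ≤ 2*n ∧ gl n w k = m := by
  obtain ⟨x, hx, hxe⟩ := hw.2.1.2.2 (ee_mem h1 h2)
  refine ⟨iot n x, (iot_mem hx).1, (iot_mem hx).2, ?_⟩
  unfold gl; rw [ee_iot hx, hxe, iot_ee h1 h2]

lemma gl_palin {k : ℤ} (h1 : 1 ≤ k) (h2 : k ≤ 2*n) :
    gl n w (2*n + 1 - k) = 2*n + 1 - gl n w k := by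
  unfold gl
  rw [ee_neg h1 h2, hw.1, iot_neg (w_mem hw (ee_mem h1 h2))]

end SP

/-- the step condition: the linearization never jumps up by more than 1. -/
def StepG (n : ℕ) (w : ℤ → ℤ) : Prop :=
  ∀ k : ℤ, 1 ≤ k → k < 2*n → gl n w (k+1) ≤ gl n w k + 1

lemma gcontains132 {n : ℕ} {w : ℤ → ℤ} {x y z : ℤ}
    (hx : x ∈ windowSet n) (hy : y ∈ windowSet n) (hz : z ∈ windowSet n)
    (hxy : x < y) (hyz : y < z) (h1 : w x < w z) (h2 : w z < w y) :
    GContains n w p132 := by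
  refine ⟨![x, y, z], ?_, ?_, ?_⟩
  · intro a b hab
    fin_cases a <;> fin_cases b <;> simp_all <;> omega
  · intro a; fin_cases a <;> simpa using by assumption
  · have e0 : p132 0 = 0 := by decide
    have e1 : p132 1 = 2 := by decide
    have e2 : p132 2 = 1 := by decide
    intro a b
    fin_cases a <;> fin_cases b <;>
      simp [e0, e1, e2] <;> omega

lemma not_gcontains132 {n : ℕ} {w : ℤ → ℤ} (hw : IsSignedPerm n w) (hs : StepG n w) :
    ¬ GContains n w p132 := by
  -- discrete IVT
  have ivt : ∀ d : ℕ, ∀ k l m : ℤ, 1 ≤ k → k ≤ l → l ≤ 2*n → l - k = d →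
      gl n w k ≤ m → m ≤ gl n w l → ∃ j : ℤ, k ≤ j ∧ j ≤ l ∧ gl n w j = m := by
    intro d
    induction d with
    | zero =>
      intro k l m h1 h2 h3 hd hm1 hm2
      have : l = k := by omega
      subst this
      exact ⟨l, le_refl _, le_refl _, by omega⟩
    | succ d IH =>
      intro k l m h1 h2 h3 hd hm1 hm2
      by_cases hc : gl n w (k+1) ≤ m
      · obtain ⟨j, hj1, hj2, hj3⟩ := IH (k+1) l m (by omega) (by omega) h3 (by omega) hc hm2
        exact ⟨j, by omega, hj2, hj3⟩
      · have := hs k h1 (by omega)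
        exact ⟨k, le_refl _, by omega, by omega⟩
  rintro ⟨i, hmono, hmem, hpat⟩
  set x := i 0 with hxdef
  set y := i 1 with hydef
  set z := i 2 with hzdef
  have hxy : x < y := hmono (by decide : (0:Fin 3) < 1)
  have hyz : y < z := hmono (by decide : (1:Fin 3) < 2)
  have e0 : p132 0 = 0 := by decide
  have e1 : p132 1 = 2 := by decide
  have e2 : p132 2 = 1 := by decide
  have hv1 : w x < w z := by
    rw [hpat 0 2, e0, e2]; decide
  have hv2 : w z < w y := by
    rw [hpat 2 1, e2, e1]; decide
  have hx := hmem 0; have hy := hmem 1; have hz := hmem 2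
  rw [← hxdef] at hx; rw [← hydef] at hy; rw [← hzdef] at hz
  -- translate to linear coordinates
  have hix := iot_mem hx; have hiy := iot_mem hy; have hiz := iot_mem hz
  have hkl : iot n x < iot n y := iot_lt_iot hx hy hxy
  have hgx : gl n w (iot n x) = iot n (w x) := by unfold gl; rw [ee_iot hx]
  have hgy : gl n w (iot n y) = iot n (w y) := by unfold gl; rw [ee_iot hy]
  have hgz : gl n w (iot n z) = iot n (w z) := by unfold gl; rw [ee_iot hz]
  have hwz := w_mem hw hz
  have hm1 : gl n w (iot n x) ≤ iot n (w z) := by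
    rw [hgx]; exact le_of_lt (iot_lt_iot (w_mem hw hx) hwz hv1)
  have hm2 : iot n (w z) ≤ gl n w (iot n y) := by
    rw [hgy]; exact le_of_lt (iot_lt_iot hwz (w_mem hw hy) hv2)
  obtain ⟨j, hj1, hj2, hj3⟩ := ivt (iot n y - iot n x).toNat (iot n x) (iot n y)
    (iot n (w z)) hix.1 (le_of_lt hkl) hiy.2 (by omega) hm1 hm2
  -- j must equal iot z, but iot z > iot y
  have : j = iot n z := by
    apply gl_inj hw (by omega) (by omega) hiz.1 hiz.2
    rw [hj3, hgz]
  have : iot n y < j := this ▸ iot_lt_iot hy hz hyz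
  omega

lemma gcontains_of_not_step {n : ℕ} {w : ℤ → ℤ} (hw : IsSignedPerm n w)
    (hs : ¬ StepG n w) : GContains n w p132 := by
  unfold StepG at hs
  push_neg at hs
  obtain ⟨k, h1, h2, hbig⟩ := hs
  -- the value between
  set m := gl n w k + 1 with hm
  have hk1 := gl_mem hw h1 (by omega)
  have hk2 := gl_mem hw (by omega : 1 ≤ k+1) (by omega : k+1 ≤ 2*n)
  have hmr : 1 ≤ m ∧ m ≤ 2*n := by omega
  obtain ⟨j, hj1, hj2, hj3⟩ := gl_surj hw hmr.1 hmr.2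
  have hjne1 : j ≠ k := by intro h; rw [h] at hj3; omega
  have hjne2 : j ≠ k + 1 := by intro h; rw [h] at hj3; omega
  unfold gl at hj3 hbig hm hk1 hk2
  rcases lt_or_gt_of_ne hjne1 with hjk | hjk
  · -- j < k : mirror occurrence at (-e(k+1), -e k, -e j)
    have hjk' : j < k := hjk
    apply gcontains132 (w := w)
      (ee_mem (n:=n) (k := 2*n+1-(k+1)) (by omega) (by omega))
      (ee_mem (n:=n) (k := 2*n+1-k) (by omega) (by omega))
      (ee_mem (n:=n) (k := 2*n+1-j) (by omega) (by omega))
      (ee_lt_ee (by omega) (by omega) (by omega))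
      (ee_lt_ee (by omega) (by omega) (by omega))
    · -- w(e(2n+1-(k+1))) < w(e(2n+1-j))
      have a1 := gl_palin hw (by omega : 1 ≤ k+1) (by omega : k+1 ≤ 2*n)
      have a2 := gl_palin hw (by omega : 1 ≤ j) (by omega : j ≤ 2*n)
      unfold gl at a1 a2
      have h1' : iot n (w (ee n (2*n+1-(k+1)))) < iot n (w (ee n (2*n+1-j))) := by
        rw [a1, a2]; omega
      by_contra hcon
      push_neg at hcon
      rcases lt_or_eq_of_le hcon with hlt | heq
      · exact absurd (iot_lt_iot (w_mem hw (ee_mem (by omega) (by omega)))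
          (w_mem hw (ee_mem (by omega) (by omega))) hlt) (by omega)
      · rw [heq] at h1'; omega
    · have a1 := gl_palin hw (by omega : 1 ≤ k) (by omega : k ≤ 2*n)
      have a2 := gl_palin hw (by omega : 1 ≤ j) (by omega : j ≤ 2*n)
      unfold gl at a1 a2
      have h1' : iot n (w (ee n (2*n+1-j))) < iot n (w (ee n (2*n+1-k))) := by
        rw [a1, a2]; omega
      by_contra hcon
      push_neg at hcon
      rcases lt_or_eq_of_le hcon with hlt | heq
      · exact absurd (iot_lt_iot (w_mem hw (ee_mem (by omega) (by omega)))
          (w_mem hw (ee_mem (by omega) (by omega))) hlt) (by omega)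
      · rw [heq] at h1'; omega
  · -- j > k+1 : direct occurrence at (e k, e (k+1), e j)
    apply gcontains132 (w := w)
      (ee_mem (n:=n) h1 (by omega))
      (ee_mem (n:=n) (k := k+1) (by omega) (by omega))
      (ee_mem (n:=n) (k := j) (by omega) (by omega))
      (ee_lt_ee (by omega) (by omega) (by omega))
      (ee_lt_ee (by omega) (by omega) (by omega))
    · -- w(e k) < w (e j)
      by_contra hcon
      push_neg at hcon
      rcases lt_or_eq_of_le hcon with hlt | heq
      · have := iot_lt_iot (w_mem hw (ee_mem (by omega) (by omega)))
          (w_mem hw (ee_mem (by omega) (by omega))) hlt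
        omega
      · have := congrArg (iot n) heq
        rw [hj3] at this
        omega
    · by_contra hcon
      push_neg at hcon
      rcases lt_or_eq_of_le hcon with hlt | heq
      · have := iot_lt_iot (w_mem hw (ee_mem (by omega) (by omega)))
          (w_mem hw (ee_mem (by omega) (by omega))) hlt
        omega
      · have := congrArg (iot n) heq
        rw [hj3] at this
        omega


/-! ### cut sets and the canonical block permutation -/

/-- largest cut strictly below `k` -/
def aC (C : Finset ℤ) (k : ℤ) : ℤ := ((C.filter (fun c => c < k)).max.unbotD 0)

/-- smallest cut at least `k` -/
def bC (C : Finset ℤ) (n : ℕ) (k : ℤ) : ℤ := ((C.filter (fun c => k ≤ c)).min.untopD (2*n))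

def gC (C : Finset ℤ) (n : ℕ) (k : ℤ) : ℤ := 2*n + k - aC C k - bC C n k

section Cuts

variable {n : ℕ} {C : Finset ℤ}
  (h0 : (0:ℤ) ∈ C) (h2n : (2*(n:ℤ)) ∈ C) (hbd : ∀ c ∈ C, 0 ≤ c ∧ c ≤ 2*n)

lemma max_unbot'_mem {s : Finset ℤ} (hs : s.Nonempty) : s.max.unbotD 0 ∈ s := by
  obtain ⟨m, hm⟩ := Finset.max_of_nonempty hs
  rw [hm]; exact Finset.mem_of_max hm

lemma le_max_unbot' {s : Finset ℤ} {x : ℤ} (hx : x ∈ s) : x ≤ s.max.unbotD 0 := by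
  obtain ⟨m, hm⟩ := Finset.max_of_nonempty ⟨x, hx⟩
  rw [hm]
  exact WithBot.coe_le_coe.1 (le_of_le_of_eq (Finset.le_max hx) hm)

lemma min_untop'_mem {s : Finset ℤ} {d : ℤ} (hs : s.Nonempty) : s.min.untopD d ∈ s := by
  obtain ⟨m, hm⟩ := Finset.min_of_nonempty hs
  rw [hm]; exact Finset.mem_of_min hm

lemma min_untop'_le {s : Finset ℤ} {d x : ℤ} (hx : x ∈ s) : s.min.untopD d ≤ x := by
  obtain ⟨m, hm⟩ := Finset.min_of_nonempty ⟨x, hx⟩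
  rw [hm]
  exact WithTop.coe_le_coe.1 (le_of_eq_of_le hm.symm (Finset.min_le hx))

include h0 in
lemma aC_spec {k : ℤ} (hk : 1 ≤ k) : aC C k ∈ C ∧ aC C k < k := by
  have hne : (C.filter (fun c => c < k)).Nonempty := ⟨0, by simp [h0]; omega⟩
  have := max_unbot'_mem hne
  simp only [Finset.mem_filter] at this
  exact ⟨this.1, this.2⟩

lemma aC_ge {k c : ℤ} (hc : c ∈ C) (hck : c < k) : c ≤ aC C k :=
  le_max_unbot' (by simp [Finset.mem_filter, hc, hck])

include h2n in
lemma bC_spec {k : ℤ} (hk : k ≤ 2*n) : bC C n k ∈ C ∧ k ≤ bC C n k := by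
  have hne : (C.filter (fun c => k ≤ c)).Nonempty := ⟨2*n, by simp [h2n]; omega⟩
  have := min_untop'_mem (d := 2*(n:ℤ)) hne
  simp only [Finset.mem_filter] at this
  exact ⟨this.1, this.2⟩

lemma bC_le {k c : ℤ} (hc : c ∈ C) (hck : k ≤ c) : bC C n k ≤ c :=
  min_untop'_le (by simp [Finset.mem_filter, hc, hck])

include h0 hbd in
lemma aC_bounds {k : ℤ} (hk : 1 ≤ k) : 0 ≤ aC C k ∧ aC C k < k := by
  have h := aC_spec h0 (C := C) hk
  exact ⟨(hbd _ h.1).1, h.2⟩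

include h2n hbd in
lemma bC_bounds {k : ℤ} (hk : k ≤ 2*n) : k ≤ bC C n k ∧ bC C n k ≤ 2*n := by
  have h := bC_spec h2n (C := C) hk
  exact ⟨h.2, (hbd _ h.1).2⟩

include h0 in
lemma aC_mono {k l : ℤ} (hk : 1 ≤ k) (hkl : k ≤ l) : aC C k ≤ aC C l := by
  have h := aC_spec h0 (C := C) hk
  exact aC_ge h.1 (by omega)

include h2n in
lemma bC_mono {k l : ℤ} (hl : l ≤ 2*n) (hkl : k ≤ l) : bC C n k ≤ bC C n l := by
  have h := bC_spec h2n (C := C) hl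
  exact bC_le h.1 (by omega)

include h0 h2n hbd in
lemma gC_bounds {k : ℤ} (h1 : 1 ≤ k) (h2 : k ≤ 2*n) :
    1 ≤ gC C n k ∧ gC C n k ≤ 2*n := by
  have ha := aC_bounds h0 hbd (C := C) h1
  have hb := bC_bounds h2n hbd (C := C) h2
  unfold gC; omega

include h0 h2n in
lemma gC_inj {k l : ℤ} (hk1 : 1 ≤ k) (hl2 : l ≤ 2*n) (hkl : k < l)
    (h : gC C n k = gC C n l) : False := by
  by_cases hb : l ≤ bC C n k
  · -- same block : a and b agree, so gC differs
    have hbk := bC_spec h2n (C := C) (k := k) (by omega)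
    have hal := aC_spec h0 (C := C) (k := l) (by omega)
    have hak := aC_spec h0 (C := C) (k := k) (by omega)
    have ha : aC C l = aC C k := by
      have h1 : aC C l ≤ aC C k := by
        rcases lt_or_ge (aC C l) k with hc | hc
        · exact aC_ge hal.1 hc
        · -- aC C l is a cut in [k, l), contradicting l ≤ bC C k
          have := bC_le (n := n) hal.1 hc
          omega
      have h2 : aC C k ≤ aC C l := aC_mono h0 (by omega) (by omega)
      omega
    have hbb : bC C n k = bC C n l := by
      have h1 : bC C n k ≤ bC C n l := bC_mono h2n (by omega) (by omega)
      have h2 : bC C n l ≤ bC C n k := bC_le hbk.1 (by omega)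
      omega
    unfold gC at h; omega
  · -- different blocks : strict decrease
    push_neg at hb
    have hbk := bC_spec h2n (C := C) (k := k) (by omega)
    have hak := aC_spec h0 (C := C) (k := k) (by omega)
    have hbl := bC_spec h2n (C := C) (k := l) (by omega)
    have hal : bC C n k ≤ aC C l := aC_ge hbk.1 hb
    unfold gC at h; omega

include h0 h2n in
lemma gC_step {k : ℤ} (h1 : 1 ≤ k) (h2 : k + 1 ≤ 2*n) :
    gC C n (k+1) ≤ gC C n k + 1 := by
  have ha : aC C k ≤ aC C (k+1) := aC_mono h0 h1 (by omega)
  have hb : bC C n k ≤ bC C n (k+1) := bC_mono h2n (by omega) (by omega)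
  unfold gC; omega

include h0 h2n in
lemma gC_palin (hsym : ∀ c ∈ C, 2*(n:ℤ) - c ∈ C) {k : ℤ} (h1 : 1 ≤ k) (h2 : k ≤ 2*n) :
    gC C n (2*n + 1 - k) = 2*n + 1 - gC C n k := by
  have hbk := bC_spec h2n (C := C) (k := k) h2
  have hak := aC_spec h0 (C := C) (k := k) h1
  have e1 : aC C (2*n+1-k) = 2*n - bC C n k := by
    have hle : 2*(n:ℤ) - bC C n k ≤ aC C (2*n+1-k) :=
      aC_ge (hsym _ hbk.1) (by omega)
    have h' := aC_spec h0 (C := C) (k := 2*n+1-k) (by omega)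
    have : 2*(n:ℤ) - aC C (2*n+1-k) ∈ C := hsym _ h'.1
    have := bC_le (k := k) (n := n) this (by omega)
    omega
  have e2 : bC C n (2*n+1-k) = 2*n - aC C k := by
    have hle : bC C n (2*n+1-k) ≤ 2*(n:ℤ) - aC C k :=
      bC_le (hsym _ hak.1) (by omega)
    have h' := bC_spec h2n (C := C) (k := 2*n+1-k) (by omega)
    have : 2*(n:ℤ) - bC C n (2*n+1-k) ∈ C := hsym _ h'.1
    have := aC_ge (k := k) this (by omega)
    omega
  unfold gC; omega

include h0 h2n in
lemma gC_descent_iff {p : ℤ} (h1 : 1 ≤ p) (h2 : p < 2*n) :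
    p ∈ C ↔ gC C n (p+1) ≠ gC C n p + 1 := by
  have hbp := bC_spec h2n (C := C) (k := p) (by omega)
  have hap := aC_spec h0 (C := C) (k := p) (by omega)
  have hbp1 := bC_spec h2n (C := C) (k := p+1) (by omega)
  have hap1 := aC_spec h0 (C := C) (k := p+1) (by omega)
  constructor
  · intro hp
    have ha1 : aC C (p+1) = p := by
      have := aC_ge hp (show p < p + 1 by omega)
      omega
    have ha0 : aC C p < p := hap.2
    have hb : bC C n p ≤ bC C n (p+1) := bC_mono h2n (by omega) (by omega)
    unfold gC; omega
  · intro hne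
    by_contra hp
    have ha : aC C (p+1) = aC C p := by
      have h1' : aC C (p+1) ≤ aC C p := by
        rcases lt_or_ge (aC C (p+1)) p with hc | hc
        · exact aC_ge hap1.1 hc
        · exfalso; have : aC C (p+1) = p := by omega
          rw [this] at hap1; exact hp hap1.1
      have h2' : aC C p ≤ aC C (p+1) := aC_mono h0 (by omega) (by omega)
      omega
    have hb : bC C n p = bC C n (p+1) := by
      have h1' : bC C n p ≤ bC C n (p+1) := bC_mono h2n (by omega) (by omega)
      have h2' : bC C n (p+1) ≤ bC C n p := by
        rcases lt_or_ge p (bC C n p) with hc | hc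
        · exact bC_le hbp.1 (by omega)
        · exfalso; have : bC C n p = p := by omega
          rw [this] at hbp; exact hp hbp.1
      omega
    apply hne
    unfold gC; omega

end Cuts


/-! ### the structure theorem -/

theorem formula {n : ℕ} {g : ℤ → ℤ} {C : Finset ℤ}
    (hmap : ∀ k : ℤ, 1 ≤ k → k ≤ 2*n → 1 ≤ g k ∧ g k ≤ 2*n)
    (hinj : ∀ k l : ℤ, 1 ≤ k → k ≤ 2*n → 1 ≤ l → l ≤ 2*n → g k = g l → k = l)
    (hsurj : ∀ m : ℤ, 1 ≤ m → m ≤ 2*n → ∃ k : ℤ, 1 ≤ k ∧ k ≤ 2*n ∧ g k = m)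
    (hstep : ∀ p : ℤ, 1 ≤ p → p < 2*n → g (p+1) ≤ g p + 1)
    (h0 : (0:ℤ) ∈ C) (h2n : (2*(n:ℤ)) ∈ C) (hbd : ∀ c ∈ C, 0 ≤ c ∧ c ≤ 2*(n:ℤ))
    (hdes : ∀ p : ℤ, 1 ≤ p → p < 2*n → (p ∈ C ↔ g (p+1) ≠ g p + 1)) :
    ∀ k : ℤ, 1 ≤ k → k ≤ 2*n → g k = gC C n k := by
  -- cut-free runs increase stepwise
  have R1 : ∀ d : ℕ, ∀ s j : ℤ, 1 ≤ s → s ≤ j → j ≤ 2*n → j - s = d →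
      (∀ c ∈ C, ¬(s ≤ c ∧ c < j)) → g j = g s + (j - s) := by
    intro d
    induction d with
    | zero =>
      intro s j h1 h2 h3 hd _
      have hj : j = s := by omega
      rw [hj]
      omega
    | succ d IH =>
      intro s j h1 h2 h3 hd hcf
      have hj1 : s ≤ j - 1 := by omega
      have prev : g (j-1) = g s + (j - 1 - s) :=
        IH s (j-1) h1 hj1 (by omega) (by omega)
          (fun c hc => by have := hcf c hc; omega)
      have hnc : (j - 1) ∉ C := fun hc => hcf _ hc ⟨by omega, by omega⟩
      have hde := hdes (j-1) (by omega) (by omega)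
      have heq : g (j-1+1) = g (j-1) + 1 := by
        by_contra hne
        exact hnc (hde.2 hne)
      have : j - 1 + 1 = j := by omega
      rw [this] at heq
      omega
  -- beyond the next cut everything drops below g s
  have T : ∀ s : ℤ, 1 ≤ s → s ≤ 2*n → ∀ q : ℤ, bC C n s < q → q ≤ 2*n → g q < g s := by
    intro s hs1 hs2
    set b := bC C n s with hbdef
    have hb := bC_spec h2n (C := C) hs2
    have hbb := (hbd _ hb.1).2
    have hcf : ∀ c ∈ C, ¬(s ≤ c ∧ c < b) := by
      intro c hc ⟨hc1, hc2⟩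
      have := bC_le (n := n) hc hc1
      omega
    have hrun : ∀ j : ℤ, s ≤ j → j ≤ b → g j = g s + (j - s) := by
      intro j hj1 hj2
      exact R1 (j - s).toNat s j hs1 hj1 (by omega) (by omega)
        (fun c hc => by have := hcf c hc; omega)
    have base : ∀ q : ℤ, q = b + 1 → q ≤ 2*n → g q < g s := by
      intro q hq hq2
      subst hq
      have hdb := hdes b (by omega) (by omega)
      have hne : g (b+1) ≠ g b + 1 := hdb.1 hb.1
      have hle : g (b+1) ≤ g b + 1 := hstep b (by omega) (by omega)
      have hgb : g b = g s + (b - s) := hrun b hb.2 (le_refl _)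
      by_contra hcon
      push_neg at hcon
      -- g (b+1) ∈ [g s, g b], so it collides with a run value
      set j := s + (g (b+1) - g s) with hj
      have hj1 : s ≤ j := by omega
      have hj2 : j ≤ b := by omega
      have : g j = g (b+1) := by rw [hrun j hj1 hj2]; omega
      have := hinj j (b+1) (by omega) (by omega) (by omega) (by omega) this
      omega
    have gen : ∀ d : ℕ, ∀ q : ℤ, q - (b+1) = d → b < q → q ≤ 2*n → g q < g s := by
      intro d
      induction d with
      | zero => intro q hd hq1 hq2; exact base q (by omega) hq2
      | succ d IH =>
        intro q hd hq1 hq2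
        have hprev : g (q-1) < g s := IH (q-1) (by omega) (by omega) (by omega)
        have hst : g (q-1+1) ≤ g (q-1) + 1 := hstep (q-1) (by omega) (by omega)
        have hqe : q - 1 + 1 = q := by omega
        rw [hqe] at hst
        rcases lt_or_eq_of_le (show g q ≤ g s by omega) with h | h
        · exact h
        · exfalso
          have := hinj q s (by omega) hq2 hs1 hs2 h
          omega
    intro q hq1 hq2
    exact gen (q - (b+1)).toNat q (by omega) (by omega) hq2
  -- the lower bound at any position
  have lowerb : ∀ s : ℤ, 1 ≤ s → s ≤ 2*n → 2*n + 1 - bC C n s ≤ g s := by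
    intro s hs1 hs2
    set b := bC C n s with hbdef
    have hb := bC_spec h2n (C := C) hs2
    have hbb := (hbd _ hb.1).2
    have hsur : Set.SurjOn g ↑(Finset.Icc (1:ℤ) b) ↑(Finset.Icc (g s) (2*(n:ℤ))) := by
      intro v hv
      simp only [Finset.coe_Icc, Set.mem_Icc] at hv
      have hgs := hmap s hs1 hs2
      obtain ⟨k, hk1, hk2, hk3⟩ := hsurj v (by omega) hv.2
      refine ⟨k, ?_, hk3⟩
      simp only [Finset.coe_Icc, Set.mem_Icc]
      refine ⟨hk1, ?_⟩
      by_contra hcon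
      push_neg at hcon
      have := T s hs1 hs2 k (by omega) hk2
      omega
    have hcard := Finset.card_le_card_of_surjOn g hsur
    rw [Int.card_Icc, Int.card_Icc] at hcard
    have hgs := hmap s hs1 hs2
    omega
  -- main induction : value at a run start
  have Pmain : ∀ d : ℕ, ∀ s : ℤ, s.toNat ≤ d → 1 ≤ s → s ≤ 2*n → (s - 1) ∈ C →
      (∀ j : ℤ, 1 ≤ j → j < s → 2*n - s + 2 ≤ g j) ∧ g s = 2*n + 1 - bC C n s := by
    intro d
    induction d with
    | zero => intro s hsd hs1; omega
    | succ d IH =>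
      intro s hsd hs1 hs2 hsC
      set b := bC C n s with hbdef
      have hb := bC_spec h2n (C := C) hs2
      have hbb := (hbd _ hb.1).2
      have hrun : ∀ j : ℤ, s ≤ j → j ≤ b → g j = g s + (j - s) := by
        intro j hj1 hj2
        refine R1 (j - s).toNat s j hs1 hj1 (by omega) (by omega) ?_
        intro c hc ⟨hc1, hc2⟩
        have := bC_le (n := n) hc hc1
        omega
      by_cases hs : s = 1
      · subst hs
        constructor
        · intro j hj1 hj2; omega
        · have h1 : g b = g 1 + (b - 1) := hrun b hb.2 (le_refl _)
          have h2 := (hmap b (by omega) hbb).2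
          have h3 := lowerb 1 (by omega) (by omega)
          omega
      · -- s ≥ 2 : use the previous run
        have hs1' : (1:ℤ) ≤ s - 1 := by omega
        have ha := aC_spec h0 (C := C) (k := s - 1) hs1'
        have ha0 := (hbd _ ha.1).1
        set s' := aC C (s-1) + 1 with hs'def
        have hIH := IH s' (by omega) (by omega) (by omega)
          (by simp only [hs'def, add_sub_cancel_right]; exact ha.1)
        have hbs' : bC C n s' = s - 1 := by
          have hle : bC C n s' ≤ s - 1 := bC_le hsC (by omega)
          have hb' := bC_spec h2n (C := C) (k := s') (by omega)
          rcases lt_or_eq_of_le hle with h | h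
          · exfalso
            have := aC_ge hb'.1 (show bC C n s' < s - 1 from h)
            omega
          · exact h
        rw [hbs'] at hIH
        have part1 : ∀ j : ℤ, 1 ≤ j → j < s → 2*n - s + 2 ≤ g j := by
          intro j hj1 hj2
          rcases lt_or_ge j s' with hj | hj
          · have := hIH.1 j hj1 hj
            omega
          · have hgj : g j = g s' + (j - s') := by
              refine R1 (j - s').toNat s' j (by omega) hj (by omega) (by omega) ?_
              intro c hc ⟨hc1, hc2⟩
              have := aC_ge hc (show c < s - 1 by omega)
              omega
            have := hIH.2
            omega
        refine ⟨part1, ?_⟩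
        have hgb : g b = g s + (b - s) := hrun b hb.2 (le_refl _)
        have hub : g b ≤ 2*n - s + 1 := by
          by_contra hcon
          push_neg at hcon
          have hgb2 := (hmap b (by omega) hbb).2
          -- all values in [2n-s+2, 2n] are attained before s
          have := Finset.surj_on_of_inj_on_of_card_le
            (s := Finset.Icc (1:ℤ) (s-1)) (t := Finset.Icc (2*(n:ℤ)-s+2) (2*n))
            (fun a _ => g a)
            (by
              intro a ha
              simp only [Finset.mem_Icc] at ha ⊢
              exact ⟨part1 a ha.1 (by omega), (hmap a ha.1 (by omega)).2⟩)
            (by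
              intro a1 a2 ha1 ha2 heq
              simp only [Finset.mem_Icc] at ha1 ha2
              exact hinj a1 a2 ha1.1 (by omega) ha2.1 (by omega) heq)
            (by rw [Int.card_Icc, Int.card_Icc]; omega)
          obtain ⟨j, hj, hjeq⟩ := this (g b) (by simp only [Finset.mem_Icc]; omega)
          simp only [Finset.mem_Icc] at hj
          have := hinj b j (by omega) hbb hj.1 (by omega) hjeq
          omega
        have hlb := lowerb s hs1 hs2
        omega
  -- conclude
  intro k hk1 hk2
  have ha := aC_spec h0 (C := C) hk1
  have ha0 := (hbd _ ha.1).1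
  set s := aC C k + 1 with hsdef
  have hP := Pmain s.toNat s (le_refl _) (by omega) (by omega)
    (by simp only [hsdef, add_sub_cancel_right]; exact ha.1)
  have hbs : bC C n s = bC C n k := by
    have hbk := bC_spec h2n (C := C) hk2
    have hle : bC C n s ≤ bC C n k := bC_mono h2n hk2 (by omega)
    have hb' := bC_spec h2n (C := C) (k := s) (by omega)
    rcases lt_or_ge (bC C n s) k with h | h
    · exfalso
      have := aC_ge hb'.1 h
      omega
    · have := bC_le (n := n) hb'.1 h
      omega
  have hgk : g k = g s + (k - s) := by
    refine R1 (k - s).toNat s k (by omega) (by omega) hk2 (by omega) ?_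
    intro c hc ⟨hc1, hc2⟩
    have := aC_ge hc hc2
    omega
  rw [hP.2, hbs] at hgk
  unfold gC
  omega


/-! ### the explicit family -/

def CT (n : ℕ) (T : Finset ℕ) : Finset ℤ :=
  insert 0 (insert (2*(n:ℤ))
    ((T.image fun t : ℕ => (n:ℤ) + t) ∪ (T.image fun t : ℕ => (n:ℤ) - t)))

section CTfacts
variable {n : ℕ} {T : Finset ℕ} (hT : T ⊆ Finset.range n)

lemma CT_zero : (0:ℤ) ∈ CT n T := by simp [CT]

lemma CT_two : (2*(n:ℤ)) ∈ CT n T := by simp [CT]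

include hT in
lemma CT_bdd : ∀ c ∈ CT n T, 0 ≤ c ∧ c ≤ 2*(n:ℤ) := by
  intro c hc
  simp only [CT, Finset.mem_insert, Finset.mem_union, Finset.mem_image] at hc
  rcases hc with h | h | ⟨t, ht, h⟩ | ⟨t, ht, h⟩ <;>
    [skip; skip; (have := Finset.mem_range.1 (hT ht)); (have := Finset.mem_range.1 (hT ht))] <;>
    omega

include hT in
lemma CT_sym : ∀ c ∈ CT n T, 2*(n:ℤ) - c ∈ CT n T := by
  intro c hc
  simp only [CT, Finset.mem_insert, Finset.mem_union, Finset.mem_image] at hc ⊢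
  rcases hc with h | h | ⟨t, ht, h⟩ | ⟨t, ht, h⟩
  · right; left; omega
  · left; omega
  · right; right; right; exact ⟨t, ht, by omega⟩
  · right; right; left; exact ⟨t, ht, by omega⟩

include hT in
lemma CT_mem_iff {p : ℤ} (h1 : 1 ≤ p) (h2 : p ≤ 2*(n:ℤ) - 1) :
    p ∈ CT n T ↔ ∃ t ∈ T, ((n:ℤ) + t = p ∨ (n:ℤ) - t = p) := by
  simp only [CT, Finset.mem_insert, Finset.mem_union, Finset.mem_image]
  constructor
  · rintro (h | h | ⟨t, ht, h⟩ | ⟨t, ht, h⟩)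
    · omega
    · omega
    · exact ⟨t, ht, Or.inl h⟩
    · exact ⟨t, ht, Or.inr h⟩
  · rintro ⟨t, ht, h | h⟩
    · exact Or.inr (Or.inr (Or.inl ⟨t, ht, h⟩))
    · exact Or.inr (Or.inr (Or.inr ⟨t, ht, h⟩))

include hT in
lemma CT_meml {t : ℕ} (htn : t < n) : ((n:ℤ) + t ∈ CT n T ↔ t ∈ T) := by
  rw [CT_mem_iff hT (by omega) (by omega)]
  constructor
  · rintro ⟨t', ht', h | h⟩
    · have : t' = t := by omega
      exact this ▸ ht'
    · have h1 : (t':ℤ) = 0 ∧ (t:ℤ) = 0 := by omega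
      have : t' = t := by omega
      exact this ▸ ht'
  · intro h; exact ⟨t, h, Or.inl rfl⟩

end CTfacts

def PhiT (n : ℕ) (T : Finset ℕ) : ℤ → ℤ := fun x =>
  if 1 ≤ |x| ∧ |x| ≤ (n:ℤ) then ee n (gC (CT n T) n (iot n x)) else x

lemma PhiT_of_mem {n : ℕ} {T : Finset ℕ} {x : ℤ} (hx : x ∈ windowSet n) :
    PhiT n T x = ee n (gC (CT n T) n (iot n x)) := by
  unfold PhiT
  rw [if_pos (by exact hx)]

lemma PhiT_of_not_mem {n : ℕ} {T : Finset ℕ} {x : ℤ} (hx : x ∉ windowSet n) :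
    PhiT n T x = x := by
  unfold PhiT
  rw [if_neg (by exact hx)]

lemma window_finite (n : ℕ) : (windowSet n).Finite := by
  apply (Set.finite_Icc (-(n:ℤ)) n).subset
  intro x hx
  rw [mem_window_iff] at hx
  simp only [Set.mem_Icc]
  omega

section PhiFacts
variable {n : ℕ} {T : Finset ℕ} (hT : T ⊆ Finset.range n)
include hT

lemma gC_CT_bounds {k : ℤ} (h1 : 1 ≤ k) (h2 : k ≤ 2*n) :
    1 ≤ gC (CT n T) n k ∧ gC (CT n T) n k ≤ 2*n :=
  gC_bounds CT_zero CT_two (CT_bdd hT) h1 h2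

lemma PhiT_SP : IsSignedPerm n (PhiT n T) := by
  have hmapsto : Set.MapsTo (PhiT n T) (windowSet n) (windowSet n) := by
    intro x hx
    rw [PhiT_of_mem hx]
    have h1 := iot_mem hx
    have h2 := gC_CT_bounds hT h1.1 h1.2
    exact ee_mem h2.1 h2.2
  have hinj : Set.InjOn (PhiT n T) (windowSet n) := by
    intro x hx y hy hxy
    rw [PhiT_of_mem hx, PhiT_of_mem hy] at hxy
    have h1 := iot_mem hx
    have h2 := iot_mem hy
    have g1 := gC_CT_bounds hT h1.1 h1.2
    have g2 := gC_CT_bounds hT h2.1 h2.2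
    have : gC (CT n T) n (iot n x) = gC (CT n T) n (iot n y) := by
      have := congrArg (iot n) hxy
      rwa [iot_ee g1.1 g1.2, iot_ee g2.1 g2.2] at this
    have hiot : iot n x = iot n y := by
      rcases lt_trichotomy (iot n x) (iot n y) with h | h | h
      · exact absurd this (fun he => gC_inj CT_zero CT_two h1.1 h2.2 h he)
      · exact h
      · exact absurd this.symm (fun he => gC_inj CT_zero CT_two h2.1 h1.2 h he)
    have := congrArg (ee n) hiot
    rwa [ee_iot hx, ee_iot hy] at this
  refine ⟨?_, ?_, ?_⟩
  · intro x
    by_cases hx : x ∈ windowSet n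
    · have hnx : -x ∈ windowSet n := neg_mem_window hx
      rw [PhiT_of_mem hx, PhiT_of_mem hnx]
      have h1 := iot_mem hx
      rw [iot_neg hx, gC_palin CT_zero CT_two (CT_sym hT) h1.1 h1.2]
      have h2 := gC_CT_bounds hT h1.1 h1.2
      exact ee_neg h2.1 h2.2
    · by_cases hx0 : x = 0
      · subst hx0
        rw [PhiT_of_not_mem (by rw [mem_window_iff]; omega)]
        simpa using (PhiT_of_not_mem hx)
      · have hnx : -x ∉ windowSet n := fun h => hx (by simpa using neg_mem_window h)
        rw [PhiT_of_not_mem hx, PhiT_of_not_mem hnx]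
  · exact ((window_finite n).injOn_iff_bijOn_of_mapsTo hmapsto).1 hinj
  · intro x hx; exact PhiT_of_not_mem hx

lemma gl_PhiT {k : ℤ} (h1 : 1 ≤ k) (h2 : k ≤ 2*n) :
    gl n (PhiT n T) k = gC (CT n T) n k := by
  unfold gl
  rw [PhiT_of_mem (ee_mem h1 h2), iot_ee h1 h2]
  have := gC_CT_bounds hT h1 h2
  rw [iot_ee this.1 this.2]

lemma StepG_PhiT : StepG n (PhiT n T) := by
  intro k h1 h2
  rw [gl_PhiT hT h1 (by omega), gl_PhiT hT (by omega) (by omega)]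
  exact gC_step CT_zero CT_two h1 (by omega)

end PhiFacts

/-- descent set of a signed permutation, encoded in `[0, n-1]`. -/
def PsiW (n : ℕ) (w : ℤ → ℤ) : Finset ℕ :=
  (Finset.range n).filter fun t => gl n w ((n:ℤ)+t+1) ≠ gl n w ((n:ℤ)+t) + 1

lemma PsiW_subset (n : ℕ) (w : ℤ → ℤ) : PsiW n w ⊆ Finset.range n :=
  Finset.filter_subset _ _

lemma PsiW_PhiT {n : ℕ} {T : Finset ℕ} (hT : T ⊆ Finset.range n) :
    PsiW n (PhiT n T) = T := by
  ext t
  simp only [PsiW, Finset.mem_filter, Finset.mem_range]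
  constructor
  · rintro ⟨htn, hd⟩
    rw [gl_PhiT hT (by omega) (by omega), gl_PhiT hT (by omega) (by omega)] at hd
    have := (gC_descent_iff CT_zero CT_two (p := (n:ℤ)+t) (by omega) (by omega)).2 hd
    exact (CT_meml hT htn).1 this
  · intro ht
    have htn := Finset.mem_range.1 (hT ht)
    refine ⟨htn, ?_⟩
    rw [gl_PhiT hT (by omega) (by omega), gl_PhiT hT (by omega) (by omega)]
    exact (gC_descent_iff CT_zero CT_two (p := (n:ℤ)+t) (by omega) (by omega)).1
      ((CT_meml hT htn).2 ht)


/-! ### reconstruction -/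

lemma reconstruct {n : ℕ} {w : ℤ → ℤ} (hw : IsSignedPerm n w) (hs : StepG n w) :
    w = PhiT n (PsiW n w) := by
  set T := PsiW n w with hTdef
  have hT : T ⊆ Finset.range n := PsiW_subset n w
  -- descents are palindromic
  have hpal : ∀ p : ℤ, 1 ≤ p → p < 2*n →
      ((gl n w (p+1) ≠ gl n w p + 1) ↔
        (gl n w ((2*n - p)+1) ≠ gl n w (2*n - p) + 1)) := by
    intro p h1 h2
    have e1 : gl n w (2*n + 1 - p) = 2*n + 1 - gl n w p := gl_palin hw (by omega) (by omega)
    have e2 : gl n w (2*n + 1 - (p+1)) = 2*n + 1 - gl n w (p+1) :=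
      gl_palin hw (by omega) (by omega)
    have e3 : (2*(n:ℤ) - p) + 1 = 2*n + 1 - p := by omega
    have e4 : (2*(n:ℤ) - p) = 2*n + 1 - (p+1) := by omega
    rw [e3, e4, e1, e2]
    omega
  have hdes : ∀ p : ℤ, 1 ≤ p → p < 2*n →
      (p ∈ CT n T ↔ gl n w (p+1) ≠ gl n w p + 1) := by
    intro p h1 h2
    rw [CT_mem_iff hT h1 (by omega)]
    constructor
    · rintro ⟨t, ht, hor⟩
      have hmem := Finset.mem_filter.1 (hTdef ▸ ht)
      have htn := Finset.mem_range.1 hmem.1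
      have hdt : gl n w ((n:ℤ)+t+1) ≠ gl n w ((n:ℤ)+t) + 1 := hmem.2
      rcases hor with h | h
      · rwa [← h]
      · -- p = n - t : use palindromicity
        have h2np : 2*(n:ℤ) - p = (n:ℤ) + t := by omega
        rw [hpal p h1 h2, h2np]
        exact hdt
    · intro hd
      rcases le_or_gt (n:ℤ) p with hp | hp
      · set t : ℕ := (p - n).toNat with htd
        have htc : (t:ℤ) = p - n := by omega
        refine ⟨t, ?_, Or.inl (by omega)⟩
        rw [hTdef]
        refine Finset.mem_filter.2 ⟨Finset.mem_range.2 (by omega), ?_⟩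
        have : (n:ℤ) + t = p := by omega
        rw [this]
        exact hd
      · set t : ℕ := (n - p).toNat with htd
        have htc : (t:ℤ) = n - p := by omega
        refine ⟨t, ?_, Or.inr (by omega)⟩
        rw [hTdef]
        refine Finset.mem_filter.2 ⟨Finset.mem_range.2 (by omega), ?_⟩
        have h2np : (n:ℤ) + t = 2*n - p := by omega
        rw [h2np, ← hpal p h1 h2]
        exact hd
  have hform := formula (n := n) (g := gl n w) (C := CT n T)
    (fun k h1 h2 => gl_mem hw h1 h2)
    (fun k l hk1 hk2 hl1 hl2 h => gl_inj hw hk1 hk2 hl1 hl2 h)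
    (fun m h1 h2 => gl_surj hw h1 h2)
    hs CT_zero CT_two (CT_bdd hT) hdes
  funext x
  by_cases hx : x ∈ windowSet n
  · rw [PhiT_of_mem hx, w_eq_ee_gl hw hx]
    have h1 := iot_mem hx
    rw [hform (iot n x) h1.1 h1.2]
  · rw [PhiT_of_not_mem hx, hw.2.2 x hx]

/-! ### the count -/

lemma main_set_eq (n : ℕ) :
    {w : ℤ → ℤ | IsSignedPerm n w ∧ ¬ GContains n w p132} =
      PhiT n '' {T : Finset ℕ | T ⊆ Finset.range n} := by
  ext w
  simp only [Set.mem_setOf_eq, Set.mem_image]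
  constructor
  · rintro ⟨hw, hav⟩
    have hs : StepG n w := by
      by_contra hns
      exact hav (gcontains_of_not_step hw hns)
    exact ⟨PsiW n w, PsiW_subset n w, (reconstruct hw hs).symm⟩
  · rintro ⟨T, hT, rfl⟩
    exact ⟨PhiT_SP hT, not_gcontains132 (PhiT_SP hT) (StepG_PhiT hT)⟩

theorem main_count (n : ℕ) :
    Set.ncard {w : ℤ → ℤ | IsSignedPerm n w ∧ ¬ GContains n w p132} = 2 ^ n := by
  rw [main_set_eq]
  have hset : {T : Finset ℕ | T ⊆ Finset.range n} = ↑((Finset.range n).powerset) := by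
    ext T; simp only [Set.mem_setOf_eq, Finset.mem_coe, Finset.mem_powerset]
  rw [Set.ncard_image_of_injOn, hset, Set.ncard_coe_finset, Finset.card_powerset,
    Finset.card_range]
  · intro T hT T' hT' h
    have := congrArg (PsiW n) h
    rwa [PsiW_PhiT hT, PsiW_PhiT hT'] at this

end Stmt8


/-- The number of signed permutations of size `n` globally avoiding `132`
is `2^n`. -/
theorem stmt8 (n : ℕ) :
    Set.ncard {w : ℤ → ℤ | IsSignedPerm n w ∧ ¬ GContains n w p132} = 2 ^ n :=
  Stmt8.main_count n
end

section
/- The number of palindromic compositions of 2n having at most k parts is ∑_{j=1}^{k} binomial(n-1, ⌊(j-1)/2⌋). -/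
/-- Compositions of `n` with `m` parts, as a Finset. -/
private def compF : ℕ → ℕ → Finset (List ℕ)
  | n, 0 => if n = 0 then {[]} else ∅
  | n, (m+1) => (Finset.Icc 1 n).biUnion fun a => (compF (n-a) m).image (a :: ·)

private lemma mem_compF : ∀ (m n : ℕ) (l : List ℕ),
    l ∈ compF n m ↔ (∀ x ∈ l, 0 < x) ∧ l.sum = n ∧ l.length = m := by
  intro m
  induction m with
  | zero =>
    intro n l
    rw [compF]
    split_ifs with h
    · subst h
      simp only [Finset.mem_singleton]
      constructor
      · rintro rfl; simp
      · rintro ⟨_, _, hl⟩; exact List.length_eq_zero_iff.mp hl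
    · simp only [Finset.notMem_empty, false_iff]
      rintro ⟨hpos, hsum, hlen⟩
      rw [List.length_eq_zero_iff.mp hlen] at hsum
      exact h (by simpa using hsum.symm)
  | succ m ih =>
    intro n l
    rw [compF]
    simp only [Finset.mem_biUnion, Finset.mem_image, Finset.mem_Icc]
    constructor
    · rintro ⟨a, ⟨ha1, han⟩, t, ht, rfl⟩
      obtain ⟨hpos, hsum, hlen⟩ := (ih (n-a) t).mp ht
      refine ⟨?_, ?_, ?_⟩
      · intro x hx
        rcases List.mem_cons.mp hx with rfl | hx
        · exact ha1
        · exact hpos x hx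
      · simp only [List.sum_cons, hsum]; omega
      · simp [hlen]
    · rintro ⟨hpos, hsum, hlen⟩
      cases l with
      | nil => simp at hlen
      | cons a t =>
        have hsum' : a + t.sum = n := by simpa using hsum
        refine ⟨a, ⟨hpos a (by simp), by omega⟩, t,
          (ih (n-a) t).mpr ⟨fun x hx => hpos x (by simp [hx]), by omega,
            by simpa using hlen⟩, rfl⟩

private lemma sum_range_choose' (N r : ℕ) :
    ∑ i ∈ Finset.range N, i.choose r = N.choose (r+1) := by
  induction N with
  | zero => simp
  | succ N ih =>
    rw [Finset.sum_range_succ, ih, Nat.choose_succ_succ, Nat.add_comm]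

private lemma sum_Icc_one {M : Type*} [AddCommMonoid M] (N : ℕ) (f : ℕ → M) :
    ∑ a ∈ Finset.Icc 1 N, f a = ∑ i ∈ Finset.range N, f (i+1) := by
  induction N with
  | zero => simp
  | succ N ih =>
    rw [Finset.sum_Icc_succ_top (by omega), Finset.sum_range_succ, ih]

private lemma compF_card : ∀ (m n : ℕ),
    (compF n m).card =
      if n = 0 then (if m = 0 then 1 else 0)
      else if m = 0 then 0 else (n-1).choose (m-1) := by
  intro m
  induction m with
  | zero =>
    intro n
    rw [compF]
    by_cases h : n = 0 <;> simp [h]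
  | succ m ih =>
    intro n
    rcases Nat.eq_zero_or_pos n with rfl | hn
    · rw [compF]; simp
    have hdisj : ∀ a ∈ Finset.Icc 1 n, ∀ b ∈ Finset.Icc 1 n, a ≠ b →
        Disjoint ((compF (n-a) m).image (a :: ·)) ((compF (n-b) m).image (b :: ·)) := by
      intro a _ b _ hab
      simp only [Finset.disjoint_left, Finset.mem_image]
      rintro x ⟨t, _, rfl⟩ ⟨t', _, heq⟩
      exact hab (by injection heq with h1 _; exact h1.symm)
    have hne : ¬ n = 0 := by omega
    rw [compF, Finset.card_biUnion hdisj]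
    have himg : ∀ a, ((compF (n-a) m).image (a :: ·)).card = (compF (n-a) m).card :=
      fun a => Finset.card_image_of_injective _ (fun t t' h => by injection h)
    simp only [himg, ih]
    rw [if_neg hne, if_neg (Nat.succ_ne_zero m), Nat.add_sub_cancel]
    cases m with
    | zero =>
      have hco : ∀ a ∈ Finset.Icc 1 n,
          (if n - a = 0 then (if 0 = 0 then 1 else 0)
            else if 0 = 0 then 0 else (n - a - 1).choose (0 - 1)) =
          (if a = n then 1 else 0) := by
        intro a ha
        simp only [Finset.mem_Icc] at ha
        by_cases h : a = n
        · subst h; simp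
        · have h2 : ¬ n - a = 0 := by omega
          simp [h, h2]
      rw [Finset.sum_congr rfl hco, Finset.sum_ite_eq' (Finset.Icc 1 n) n (fun _ => 1),
        if_pos (Finset.mem_Icc.mpr ⟨by omega, le_refl n⟩)]
      simp
    | succ r =>
      -- summand is `if n - a = 0 then 0 else (n-a-1).choose r`
      have hsimp : ∀ a ∈ Finset.Icc 1 n, (if n - a = 0 then (if r + 1 = 0 then 1 else 0)
          else if r + 1 = 0 then 0 else (n - a - 1).choose (r + 1 - 1)) =
          (if n - a = 0 then 0 else (n - a - 1).choose r) := by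
        intro a _; by_cases h : n - a = 0 <;> simp [h]
      rw [Finset.sum_congr rfl hsimp, sum_Icc_one]
      have hre : ∀ i ∈ Finset.range n,
          (if n - (i+1) = 0 then 0 else (n - (i+1) - 1).choose r) =
          (fun b => if b = 0 then (0:ℕ) else (b-1).choose r) (n - 1 - i) := by
        intro i _
        have h : n - (i+1) = n - 1 - i := by omega
        simp only [h]
      rw [Finset.sum_congr rfl hre,
        Finset.sum_range_reflect (fun b => if b = 0 then (0:ℕ) else (b-1).choose r) n]
      obtain ⟨N, rfl⟩ : ∃ N, n = N + 1 := ⟨n - 1, by omega⟩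
      rw [Finset.sum_range_succ' (fun b => if b = 0 then (0:ℕ) else (b-1).choose r) N]
      have e2 : ∀ i ∈ Finset.range N,
          (if i + 1 = 0 then (0:ℕ) else (i + 1 - 1).choose r) = i.choose r := by
        intro i _
        rw [if_neg (Nat.succ_ne_zero i), Nat.add_sub_cancel]
      rw [Finset.sum_congr rfl e2, if_pos rfl, add_zero, sum_range_choose',
        Nat.add_sub_cancel]

/-- Glue a composition of `n` into a palindromic composition of `2n` of length `j`. -/
private def glue (j : ℕ) (b : List ℕ) : List ℕ :=
  if j % 2 = 0 then b ++ b.reverse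
  else b.dropLast ++ (2 * b.reverse.headI) :: b.dropLast.reverse

private def PF (n j : ℕ) : Finset (List ℕ) := (compF n ((j+1)/2)).image (glue j)

private lemma mem_PF {n j : ℕ} (hj : 1 ≤ j) {c : List ℕ} :
    c ∈ PF n j ↔ (∀ x ∈ c, 0 < x) ∧ c.sum = 2 * n ∧ c.reverse = c ∧ c.length = j := by
  have hm1 : 1 ≤ (j+1)/2 := by omega
  simp only [PF, Finset.mem_image]
  constructor
  · rintro ⟨b, hb, rfl⟩
    obtain ⟨hpos, hsum, hlen⟩ := (mem_compF _ _ _).mp hb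
    have hbne : b ≠ [] := by
      intro h; rw [h] at hlen; simp at hlen; omega
    obtain ⟨a, x, rfl⟩ : ∃ a x, b = a ++ [x] :=
      ⟨b.dropLast, b.getLast hbne, (List.dropLast_append_getLast hbne).symm⟩
    have hxpos : 0 < x := hpos x (by simp)
    have hsum' : a.sum + x = n := by simpa using hsum
    have hlen' : a.length + 1 = (j+1)/2 := by simpa using hlen
    unfold glue
    by_cases hpar : j % 2 = 0
    · rw [if_pos hpar]
      refine ⟨?_, ?_, ?_, ?_⟩
      · intro y hy
        rcases List.mem_append.mp hy with h | h
        · exact hpos _ h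
        · exact hpos _ (List.mem_reverse.mp h)
      · rw [List.sum_append, List.sum_reverse]
        simp only [List.sum_append, List.sum_cons, List.sum_nil] at *
        omega
      · simp
      · simp only [List.length_append, List.length_reverse, List.length_cons,
          List.length_nil] at *
        omega
    · rw [if_neg hpar]
      have h1 : (a ++ [x]).dropLast = a := List.dropLast_concat
      have h2 : (a ++ [x]).reverse.headI = x := by simp
      rw [h1, h2]
      refine ⟨?_, ?_, ?_, ?_⟩
      · intro y hy
        simp only [List.mem_append, List.mem_cons, List.mem_reverse] at hy
        rcases hy with h | h | h
        · exact hpos _ (by simp [h])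
        · omega
        · exact hpos _ (by simp [h])
      · simp only [List.sum_append, List.sum_cons, List.sum_reverse]
        omega
      · simp
      · simp only [List.length_append, List.length_cons, List.length_reverse] at *
        omega
  · rintro ⟨hpos, hsum, hrev, hlen⟩
    set m := (j+1)/2 with hm
    by_cases hpar : j % 2 = 0
    · -- even length
      set b := c.take m with hbdef
      have hdrop : c.drop m = b.reverse := by
        rw [hbdef, List.reverse_take, hrev]
        congr 1
        omega
      have hsplit : b ++ b.reverse = c := by rw [← hdrop, List.take_append_drop]
      have hsum2 : b.sum + b.sum = 2 * n := by
        have := congrArg List.sum hsplit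
        rw [List.sum_append, List.sum_reverse] at this
        omega
      refine ⟨b, (mem_compF _ _ _).mpr ⟨?_, by omega, ?_⟩, ?_⟩
      · intro x hx; exact hpos x (List.mem_of_mem_take hx)
      · rw [hbdef, List.length_take]; omega
      · unfold glue; rw [if_pos hpar]; exact hsplit
    · -- odd length
      set a := c.take (m-1) with hadef
      have hlt : m - 1 < c.length := by omega
      have hdrop : c.drop m = a.reverse := by
        rw [hadef, List.reverse_take, hrev]
        congr 1
        omega
      obtain ⟨y, t, hyt⟩ : ∃ y t, c.drop (m-1) = y :: t := by
        cases hd : c.drop (m-1) with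
        | nil =>
          have := congrArg List.length hd
          simp only [List.length_drop, List.length_nil] at this
          omega
        | cons y t => exact ⟨y, t, rfl⟩
      have hdropy : c.drop (m-1) = y :: c.drop m := by
        have h1 : (c.drop (m-1)).drop 1 = c.drop m := by
          rw [List.drop_drop]
          congr 1
          omega
        rw [hyt] at h1 ⊢
        simp only [List.drop_succ_cons, List.drop_zero] at h1
        rw [h1]
      have hc : c = a ++ y :: a.reverse := by
        conv_lhs => rw [← List.take_append_drop (m-1) c]
        rw [hdropy, hdrop]
      have hypos : 0 < y := hpos y (by rw [hc]; simp)
      have hsum' : a.sum + y + a.sum = 2 * n := by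
        have := hsum
        rw [hc] at this
        simp only [List.sum_append, List.sum_cons, List.sum_reverse] at this
        omega
      set x := n - a.sum with hxdef
      have hy2 : y = 2 * x := by omega
      have halen : a.length = m - 1 := by
        rw [hadef, List.length_take]; omega
      refine ⟨a ++ [x], (mem_compF _ _ _).mpr ⟨?_, ?_, ?_⟩, ?_⟩
      · intro z hz
        rcases List.mem_append.mp hz with h | h
        · rw [hadef] at h
          exact hpos z (List.mem_of_mem_take h)
        · simp only [List.mem_singleton] at h
          omega
      · simp only [List.sum_append, List.sum_cons, List.sum_nil]
        omega
      · simp only [List.length_append, List.length_cons, List.length_nil]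
        omega
      · unfold glue
        rw [if_neg hpar, List.dropLast_concat, (by simp : (a ++ [x]).reverse.headI = x),
          ← hy2, ← hc]

private lemma glue_injOn (n j : ℕ) (hj : 1 ≤ j) :
    Set.InjOn (glue j) ↑(compF n ((j+1)/2)) := by
  intro b hb b' hb' heq
  obtain ⟨_, _, hlen⟩ := (mem_compF _ _ _).mp hb
  obtain ⟨_, _, hlen'⟩ := (mem_compF _ _ _).mp hb'
  have hm1 : 1 ≤ (j+1)/2 := by omega
  have hbne : b ≠ [] := by intro h; rw [h] at hlen; simp at hlen; omega
  have hbne' : b' ≠ [] := by intro h; rw [h] at hlen'; simp at hlen'; omega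
  obtain ⟨a, x, rfl⟩ : ∃ a x, b = a ++ [x] :=
    ⟨b.dropLast, b.getLast hbne, (List.dropLast_append_getLast hbne).symm⟩
  obtain ⟨a', x', rfl⟩ : ∃ a x, b' = a ++ [x] :=
    ⟨b'.dropLast, b'.getLast hbne', (List.dropLast_append_getLast hbne').symm⟩
  simp only [List.length_append, List.length_cons, List.length_nil] at hlen hlen'
  unfold glue at heq
  split_ifs at heq with hpar
  · exact (List.append_inj heq (by simp; omega)).1
  · rw [List.dropLast_concat, List.dropLast_concat,
      (by simp : (a ++ [x]).reverse.headI = x),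
      (by simp : (a' ++ [x']).reverse.headI = x')] at heq
    obtain ⟨h1, h2⟩ := List.append_inj heq (by omega)
    have h3 : x = x' := by injection h2 with h2a _; omega
    rw [h1, h3]

/-- The number of palindromic compositions of `2n` having at most `k` parts
is `∑_{j=1}^{k} (n-1).choose ⌊(j-1)/2⌋`. -/
theorem stmt12 (n k : ℕ) (hn : 1 ≤ n) :
    Set.ncard {c : List ℕ | (∀ x ∈ c, 0 < x) ∧ c.sum = 2 * n ∧ c.reverse = c ∧
        c.length ≤ k} =
      ∑ j ∈ Finset.Icc 1 k, (n - 1).choose ((j - 1) / 2) := by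
  have hdisj : ∀ a ∈ Finset.Icc 1 k, ∀ b ∈ Finset.Icc 1 k, a ≠ b →
      Disjoint (PF n a) (PF n b) := by
    intro a ha b hb hab
    simp only [Finset.mem_Icc] at ha hb
    simp only [Finset.disjoint_left]
    intro c hca hcb
    have h1 := ((mem_PF ha.1).mp hca).2.2.2
    have h2 := ((mem_PF hb.1).mp hcb).2.2.2
    exact hab (h1 ▸ h2 ▸ rfl)
  have hS : {c : List ℕ | (∀ x ∈ c, 0 < x) ∧ c.sum = 2 * n ∧ c.reverse = c ∧
      c.length ≤ k} = ↑((Finset.Icc 1 k).biUnion (PF n)) := by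
    ext c
    simp only [Finset.coe_biUnion, Set.mem_iUnion, Finset.mem_coe, Finset.mem_Icc,
      Set.mem_setOf_eq]
    constructor
    · rintro ⟨hpos, hsum, hrev, hlen⟩
      have hne : c ≠ [] := by
        rintro rfl
        simp only [List.sum_nil] at hsum
        omega
      have h1 : 1 ≤ c.length := List.length_pos_iff.mpr hne
      exact ⟨c.length, ⟨h1, hlen⟩, (mem_PF h1).mpr ⟨hpos, hsum, hrev, rfl⟩⟩
    · rintro ⟨j, ⟨hj1, hjk⟩, hc⟩
      obtain ⟨hpos, hsum, hrev, hlen⟩ := (mem_PF hj1).mp hc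
      exact ⟨hpos, hsum, hrev, hlen ▸ hjk⟩
  rw [hS, Set.ncard_coe_finset, Finset.card_biUnion hdisj]
  apply Finset.sum_congr rfl
  intro j hj
  simp only [Finset.mem_Icc] at hj
  rw [PF, Finset.card_image_of_injOn (glue_injOn n j hj.1), compF_card]
  rw [if_neg (by omega : ¬ n = 0), if_neg (by omega : ¬ (j+1)/2 = 0)]
  congr 1
  omega
end

section
/- Define for fixed k ≥ 1 the sequence f^{(k)}_i by f^{(k)}_i = 1 if i = ⌊k/2⌋+1, f^{(k)}_i = 0 for any other i with 1 ≤ i ≤ k, and f^{(k)}_i = ∑_{j=1}^{k} f^{(k)}_{i-j} for i > k. Then f^{(k)}_{n+k+1} = 2^n for 0 ≤ n ≤ ⌊k/2⌋, and f^{(k)}_{n+k+1} = 2^n − 2^{n−⌊k/2⌋−1} for ⌊k/2⌋ < n < k. -/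
/-- Closed formulas for the Fibonacci-like sequence `f^{(k)}`. -/
theorem stmt13 (k : ℕ) (hk : 1 ≤ k) (f : ℕ → ℕ)
    (h1 : f (k / 2 + 1) = 1)
    (h0 : ∀ i, 1 ≤ i → i ≤ k → i ≠ k / 2 + 1 → f i = 0)
    (hrec : ∀ i, k < i → f i = ∑ j ∈ Finset.Icc 1 k, f (i - j)) :
    (∀ n : ℕ, n ≤ k / 2 → f (n + k + 1) = 2 ^ n) ∧
    (∀ n : ℕ, k / 2 < n → n < k → f (n + k + 1) = 2 ^ n - 2 ^ (n - k / 2 - 1)) := by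
  have fA : ∀ n : ℕ, f (n + k + 1) = ∑ i ∈ Finset.range k, f (n + 1 + i) := by
    intro n
    rw [hrec _ (by omega), ← Finset.Ico_add_one_right_eq_Icc, Finset.sum_Ico_eq_sum_range,
      show k + 1 - 1 = k from by omega, ← Finset.sum_range_reflect]
    refine Finset.sum_congr rfl fun i hi => ?_
    rw [Finset.mem_range] at hi
    congr 1
    omega
  have fB : ∀ n : ℕ, f (n + k + 2) + f (n + 1) = 2 * f (n + k + 1) := by
    intro n
    have hA1 := fA (n + 1)
    have hA2 := fA n
    have e1 : ∑ i ∈ Finset.range (k + 1), f (n + 1 + i)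
        = (∑ i ∈ Finset.range k, f (n + 2 + i)) + f (n + 1) := by
      rw [Finset.sum_range_succ']
      congr 1
      exact Finset.sum_congr rfl fun i _ => by congr 1 <;> omega
    have e2 : ∑ i ∈ Finset.range (k + 1), f (n + 1 + i)
        = (∑ i ∈ Finset.range k, f (n + 1 + i)) + f (n + 1 + k) :=
      Finset.sum_range_succ _ k
    have hidx : f (n + 1 + k) = f (n + k + 1) := by congr 1 <;> omega
    have hidx2 : f (n + k + 2) = f (n + 1 + k + 1) := by congr 1 <;> omega
    rw [hidx2, hA1]
    have : (∑ i ∈ Finset.range k, f (n + 1 + 1 + i)) = ∑ i ∈ Finset.range k, f (n + 2 + i) :=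
      Finset.sum_congr rfl fun i _ => by congr 1 <;> omega
    rw [this]
    rw [hidx] at e2
    omega
  have base : f (k + 1) = 1 := by
    have hA := fA 0
    rw [show 0 + k + 1 = k + 1 from by omega] at hA
    rw [hA, Finset.sum_eq_single_of_mem (k / 2) (Finset.mem_range.mpr (by omega))]
    · rw [show 0 + 1 + k / 2 = k / 2 + 1 from by omega]; exact h1
    · intro i hi hne
      rw [Finset.mem_range] at hi
      exact h0 _ (by omega) (by omega) (by omega)
  have main : ∀ n, n < k →
      f (n + k + 1) = if n ≤ k / 2 then 2 ^ n else 2 ^ n - 2 ^ (n - k / 2 - 1) := by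
    intro n
    induction n with
    | zero =>
      intro _
      rw [if_pos (by omega), show 0 + k + 1 = k + 1 from by omega, base, pow_zero]
    | succ n ih =>
      intro hn
      have hB := fB n
      have ihv := ih (by omega)
      rw [show n + 1 + k + 1 = n + k + 2 from by omega]
      by_cases hc : n + 1 ≤ k / 2
      · rw [if_pos hc]
        have hz : f (n + 1) = 0 := h0 _ (by omega) (by omega) (by omega)
        rw [if_pos (by omega)] at ihv
        have hp : (2 : ℕ) ^ (n + 1) = 2 * 2 ^ n := by ring
        omega
      · rw [if_neg hc]
        by_cases hc2 : n + 1 = k / 2 + 1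
        · have ho : f (n + 1) = 1 := by rw [hc2]; exact h1
          rw [if_pos (by omega)] at ihv
          have hp : (2 : ℕ) ^ (n + 1) = 2 * 2 ^ n := by ring
          rw [show n + 1 - k / 2 - 1 = 0 from by omega, pow_zero]
          omega
        · have hz : f (n + 1) = 0 := h0 _ (by omega) (by omega) hc2
          rw [if_neg (by omega)] at ihv
          have hle : (2 : ℕ) ^ (n - k / 2 - 1) ≤ 2 ^ n :=
            Nat.pow_le_pow_right (by norm_num) (by omega)
          have hp : (2 : ℕ) ^ (n + 1) = 2 * 2 ^ n := by ring
          have hp2 : (2 : ℕ) ^ (n + 1 - k / 2 - 1) = 2 * 2 ^ (n - k / 2 - 1) := by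
            rw [show n + 1 - k / 2 - 1 = (n - k / 2 - 1) + 1 from by omega, pow_succ]
            ring
          omega
  refine ⟨fun n hn => ?_, fun n hn1 hn2 => ?_⟩
  · have h := main n (by omega)
    rwa [if_pos hn] at h
  · have h := main n hn2
    rwa [if_neg (by omega)] at h
end

section
/- The number of palindromic compositions of 2n whose parts are all at most k satisfies the recurrence a_n = ∑_{j=1}^{k} a_{n-j} for n > k (where a_m counts palindromic compositions of 2m with all parts at most k), with initial values a_n = 2^n for 0 ≤ n ≤ ⌊k/2⌋ and a_n = 2^n − 2^{n−⌊k/2⌋−1} for ⌊k/2⌋ < n < k (with a_0 = 1 counting the empty composition). -/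
def comps (k : ℕ) : ℕ → Finset (List ℕ)
  | 0 => {[]}
  | (n+1) =>
    (Finset.Icc 1 (min k (n+1))).attach.biUnion
      (fun j => (comps k (n + 1 - j.1)).image (fun c => j.1 :: c))
decreasing_by
  obtain ⟨h1, _⟩ := Finset.mem_Icc.1 j.2; omega

lemma mem_comps (k : ℕ) : ∀ n c, c ∈ comps k n ↔ (∀ x ∈ c, 0 < x ∧ x ≤ k) ∧ c.sum = n := by
  intro n
  induction n using Nat.strong_induction_on with
  | _ n IH =>
    intro c
    match n with
    | 0 =>
      simp only [comps]
      constructor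
      · rintro h; simp at h; subst h; simp
      · rintro ⟨hp, hs⟩
        cases c with
        | nil => simp
        | cons x t =>
          exfalso
          have := (hp x (by simp)).1
          simp at hs; omega
    | (n+1) =>
      rw [comps]
      simp only [Finset.mem_biUnion, Finset.mem_attach, Finset.mem_image, true_and,
        Subtype.exists, Finset.mem_Icc]
      constructor
      · rintro ⟨j, ⟨hj1, hj2⟩, b, hb, rfl⟩
        rw [IH (n+1-j) (by omega)] at hb
        obtain ⟨hbp, hbs⟩ := hb
        refine ⟨?_, ?_⟩
        · intro x hx
          rcases List.mem_cons.1 hx with rfl | hx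
          · exact ⟨by omega, le_trans hj2 (min_le_left _ _)⟩
          · exact hbp x hx
        · simp [hbs]; omega
      · rintro ⟨hp, hs⟩
        cases c with
        | nil => simp at hs
        | cons x b =>
          have hx := hp x (by simp)
          simp only [List.sum_cons] at hs
          refine ⟨x, ⟨hx.1, le_min hx.2 (by omega)⟩, b, ?_, rfl⟩
          rw [IH (n+1-x) (by omega)]
          exact ⟨fun y hy => hp y (by simp [hy]), by omega⟩

lemma card_comps_zero (k : ℕ) : (comps k 0).card = 1 := by simp [comps]

lemma card_comps_succ (k n : ℕ) :
    (comps k (n+1)).card = ∑ j ∈ Finset.Icc 1 (min k (n+1)), (comps k (n+1-j)).card := by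
  rw [comps, Finset.card_biUnion, ← Finset.sum_attach (Finset.Icc 1 (min k (n+1)))]
  · congr 1
    ext j
    rw [Finset.card_image_of_injective _ (fun a b h => by injection h)]
  · rintro ⟨i, hi⟩ - ⟨j, hj⟩ - hij
    simp only [Finset.disjoint_left, Finset.mem_image]
    rintro c ⟨b, -, rfl⟩ ⟨b', -, h⟩
    injection h with h1 h2
    exact hij (Subtype.ext h1.symm)

def halfmap (j : ℕ) (b : List ℕ) : List ℕ :=
  if j = 0 then b ++ b.reverse else b ++ (2*j) :: b.reverse

def pcomps (k m : ℕ) : Finset (List ℕ) :=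
  (comps k (2*m)).filter (fun c => c.reverse = c)

lemma pcomps_eq (k m : ℕ) (hk : 1 ≤ k) :
    pcomps k m = (Finset.range (min m (k/2) + 1)).biUnion
      (fun j => (comps k (m-j)).image (halfmap j)) := by
  ext l
  simp only [pcomps, Finset.mem_filter, mem_comps, Finset.mem_biUnion, Finset.mem_range,
    Finset.mem_image]
  constructor
  · rintro ⟨⟨hp, hs⟩, hrev⟩
    rcases Nat.even_or_odd l.length with ⟨q, hq⟩ | ⟨q, hq⟩
    · -- even length
      have hdrop : l.drop q = (l.take q).reverse := by
        conv_lhs => rw [← hrev]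
        rw [List.drop_reverse, show l.length - q = q from by omega]
      have hc : l = l.take q ++ (l.take q).reverse := by
        conv_lhs => rw [← List.take_append_drop q l]
        rw [hdrop]
      have hsum : (l.take q).sum = m := by
        have h2 := hs
        rw [hc] at h2
        simp only [List.sum_append, List.sum_reverse] at h2
        omega
      refine ⟨0, by omega, l.take q, ⟨fun x hx => hp x (List.take_subset _ _ hx), by
        simpa using hsum⟩, ?_⟩
      simp only [halfmap, if_pos rfl]
      exact hc.symm
    · -- odd length
      have hql : q < l.length := by omega
      have hdrop1 : l.drop (q+1) = (l.take q).reverse := by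
        conv_lhs => rw [← hrev]
        rw [List.drop_reverse, show l.length - (q+1) = q from by omega]
      have hc : l = l.take q ++ l.get ⟨q, hql⟩ :: (l.take q).reverse := by
        conv_lhs => rw [← List.take_append_drop q l]
        rw [List.drop_eq_getElem_cons hql, hdrop1, List.get_eq_getElem]
      have hxc : l.get ⟨q, hql⟩ ∈ l := List.get_mem _ _
      obtain ⟨hx0, hxk⟩ := hp _ hxc
      have hsum : l.get ⟨q, hql⟩ + 2 * (l.take q).sum = 2 * m := by
        have h2 := hs
        rw [hc] at h2
        simp only [List.sum_append, List.sum_cons, List.sum_reverse] at h2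
        omega
      refine ⟨m - (l.take q).sum, by omega, l.take q,
        ⟨fun x hx => hp x (List.take_subset _ _ hx), by omega⟩, ?_⟩
      have hj0 : m - (l.take q).sum ≠ 0 := by omega
      simp only [halfmap, if_neg hj0]
      rw [show 2 * (m - (l.take q).sum) = l.get ⟨q, hql⟩ from by omega]
      exact hc.symm
  · rintro ⟨j, hj, b, ⟨hbp, hbs⟩, rfl⟩
    have hjm : j ≤ m := by omega
    have hjk : 2 * j ≤ k := by omega
    rcases Nat.eq_zero_or_pos j with rfl | hj0
    · refine ⟨⟨?_, ?_⟩, ?_⟩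
      · intro x hx
        simp only [halfmap, reduceIte, List.mem_append, List.mem_reverse] at hx
        rcases hx with hx | hx <;> exact hbp x hx
      · simp only [halfmap, reduceIte, List.sum_append, List.sum_reverse, hbs]
        omega
      · simp [halfmap, List.reverse_append]
    · have hj0' : j ≠ 0 := by omega
      refine ⟨⟨?_, ?_⟩, ?_⟩
      · intro x hx
        simp only [halfmap, if_neg hj0', List.mem_append, List.mem_cons,
          List.mem_reverse] at hx
        rcases hx with hx | rfl | hx
        · exact hbp x hx
        · exact ⟨by omega, hjk⟩
        · exact hbp x hx
      · simp only [halfmap, if_neg hj0', List.sum_append, List.sum_cons, List.sum_reverse, hbs]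
        omega
      · simp [halfmap, if_neg hj0', List.reverse_append]

lemma halfmap_inj (j : ℕ) : Function.Injective (halfmap j) := by
  intro b b' h
  simp only [halfmap] at h
  split_ifs at h
  all_goals {
    have hl : b.length = b'.length := by
      have := congrArg List.length h; simp at this; omega
    have h2 := congrArg (List.take b.length) h
    rwa [List.take_left, hl, List.take_left] at h2 }

lemma card_pcomps (k m : ℕ) (hk : 1 ≤ k) :
    (pcomps k m).card = ∑ j ∈ Finset.range (min m (k/2) + 1), (comps k (m-j)).card := by
  rw [pcomps_eq k m hk, Finset.card_biUnion]
  · exact Finset.sum_congr rfl fun j _ => Finset.card_image_of_injective _ (halfmap_inj j)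
  · rintro i hi j hj hij
    simp only [Finset.disjoint_left, Finset.mem_image]
    rintro c ⟨b, -, rfl⟩ ⟨b', -, h⟩
    apply hij
    simp only [halfmap] at h
    split_ifs at h with h1 h2 h2
    · omega
    · have := congrArg List.length h; simp at this; omega
    · have := congrArg List.length h; simp at this; omega
    · have hl : b.length = b'.length := by
        have := congrArg List.length h; simp at this; omega
      have h3 := congrArg (List.drop b.length) h
      rw [List.drop_left, hl, List.drop_left] at h3
      injection h3 with h4 h5
      omega

lemma sum_comps (k : ℕ) : ∀ n, n ≤ k → ∑ t ∈ Finset.range (n+1), (comps k t).card = 2^n := by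
  intro n
  induction n with
  | zero => intro _; simpa using card_comps_zero k
  | succ n IH =>
    intro hn
    rw [Finset.sum_range_succ, IH (by omega), card_comps_succ]
    rw [show min k (n+1) = n+1 from by omega]
    have h2 : ∑ j ∈ Finset.Icc 1 (n+1), (comps k (n+1-j)).card
         = ∑ t ∈ Finset.range (n+1), (comps k t).card := by
      refine Finset.sum_bij' (fun j _ => n+1-j) (fun t _ => n+1-t) ?_ ?_ ?_ ?_ ?_
      · intro a ha; simp only [Finset.mem_Icc] at ha; simp only [Finset.mem_range]; omega
      · intro a ha; simp only [Finset.mem_range] at ha; simp only [Finset.mem_Icc]; omega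
      · intro a ha; simp only [Finset.mem_Icc] at ha; show n+1-(n+1-a) = a; omega
      · intro a ha; simp only [Finset.mem_range] at ha; show n+1-(n+1-a) = a; omega
      · intro a ha; rfl
    rw [h2, IH (by omega)]; ring

lemma comps_card_eq (k t : ℕ) (h1 : 1 ≤ t) (h2 : t ≤ k) : (comps k t).card = 2^(t-1) := by
  obtain ⟨s, rfl⟩ : ∃ s, t = s + 1 := ⟨t-1, by omega⟩
  have ha := sum_comps k (s+1) h2
  have hb := sum_comps k s (by omega)
  rw [Finset.sum_range_succ, hb] at ha
  have hp : (2:ℕ)^(s+1) = 2 * 2^s := by ring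
  simp only [Nat.add_sub_cancel]
  omega

lemma comps_card_rec (k t : ℕ) (h1 : 1 ≤ t) :
    (comps k t).card = ∑ i ∈ Finset.Icc 1 k, if i ≤ t then (comps k (t-i)).card else 0 := by
  obtain ⟨s, rfl⟩ : ∃ s, t = s + 1 := ⟨t-1, by omega⟩
  rw [card_comps_succ, ← Finset.sum_filter]
  congr 1
  ext i
  simp only [Finset.mem_Icc, Finset.mem_filter]
  omega

/-- The counting sequence of palindromic compositions of `2m` with all parts
at most `k` satisfies the `k`-term recurrence and the stated initial values. -/
theorem stmt14 (k : ℕ) (hk : 1 ≤ k) (a : ℕ → ℕ)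
    (ha : ∀ m : ℕ, a m = Set.ncard {c : List ℕ |
      (∀ x ∈ c, 0 < x ∧ x ≤ k) ∧ c.sum = 2 * m ∧ c.reverse = c}) :
    (∀ n : ℕ, k < n → a n = ∑ j ∈ Finset.Icc 1 k, a (n - j)) ∧
    (∀ n : ℕ, n ≤ k / 2 → a n = 2 ^ n) ∧
    (∀ n : ℕ, k / 2 < n → n < k → a n = 2 ^ n - 2 ^ (n - k / 2 - 1)) := by
  have haP : ∀ m, a m = ∑ j ∈ Finset.range (min m (k/2) + 1), (comps k (m-j)).card := by
    intro m
    rw [ha m, ← card_pcomps k m hk, ← Set.ncard_coe_finset]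
    congr 1
    ext c
    simp only [pcomps, Finset.coe_filter, Set.mem_setOf_eq, mem_comps]
    tauto
  have haF : ∀ m, a m = ∑ j ∈ Finset.range (k/2 + 1),
      if j ≤ m then (comps k (m-j)).card else 0 := by
    intro m
    rw [haP m, ← Finset.sum_filter]
    congr 1
    ext j
    simp only [Finset.mem_range, Finset.mem_filter]
    omega
  refine ⟨?_, ?_, ?_⟩
  · -- recurrence
    intro n hn
    rw [haF n]
    have step : ∀ j ∈ Finset.range (k/2+1),
        (if j ≤ n then (comps k (n-j)).card else 0)
          = ∑ i ∈ Finset.Icc 1 k, if i + j ≤ n then (comps k (n-i-j)).card else 0 := by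
      intro j hj
      simp only [Finset.mem_range] at hj
      rw [if_pos (by omega : j ≤ n), comps_card_rec k (n-j) (by omega)]
      refine Finset.sum_congr rfl fun i hi => ?_
      simp only [Finset.mem_Icc] at hi
      by_cases h : i + j ≤ n
      · rw [if_pos (by omega : i ≤ n - j), if_pos h, show n-j-i = n-i-j from by omega]
      · rw [if_neg (by omega), if_neg h]
    rw [Finset.sum_congr rfl step, Finset.sum_comm]
    refine Finset.sum_congr rfl fun i hi => ?_
    simp only [Finset.mem_Icc] at hi
    rw [haF (n-i)]
    refine Finset.sum_congr rfl fun j hj => ?_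
    simp only [Finset.mem_range] at hj
    by_cases h : i + j ≤ n
    · rw [if_pos h, if_pos (by omega : j ≤ n - i), show n-i-j = n-i-j from rfl]
    · rw [if_neg h, if_neg (by omega)]
  · -- initial small values
    intro n hn
    rw [haP n, show min n (k/2) = n from by omega]
    have hr := Finset.sum_range_reflect (fun t => (comps k t).card) (n+1)
    simp only [Nat.add_sub_cancel] at hr
    rw [hr]
    exact sum_comps k n (by omega)
  · -- middle range
    intro n hn1 hn2
    rw [haP n, show min n (k/2) = k/2 from by omega]
    have hbij : ∑ j ∈ Finset.range (k/2+1), (comps k (n-j)).card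
        = ∑ s ∈ Finset.Ico (n - k/2) (n+1), (comps k s).card := by
      refine Finset.sum_bij' (fun j _ => n - j) (fun s _ => n - s) ?_ ?_ ?_ ?_ ?_
      · intro x hx; simp only [Finset.mem_range] at hx; simp only [Finset.mem_Ico]; omega
      · intro x hx; simp only [Finset.mem_Ico] at hx; simp only [Finset.mem_range]; omega
      · intro x hx; simp only [Finset.mem_range] at hx; show n - (n - x) = x; omega
      · intro x hx; simp only [Finset.mem_Ico] at hx; show n - (n - x) = x; omega
      · intro x hx; rfl
    rw [hbij]
    have hcons : ∑ t ∈ Finset.Ico 0 (n - k/2), (comps k t).card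
        + ∑ t ∈ Finset.Ico (n - k/2) (n+1), (comps k t).card
        = ∑ t ∈ Finset.Ico 0 (n+1), (comps k t).card :=
      Finset.sum_Ico_consecutive _ (by omega) (by omega)
    have h1 : ∑ t ∈ Finset.Ico 0 (n - k/2), (comps k t).card = 2^(n - k/2 - 1) := by
      rw [← Finset.range_eq_Ico]
      have h3 := sum_comps k (n - k/2 - 1) (by omega)
      rwa [show (n - k/2 - 1) + 1 = n - k/2 from by omega] at h3
    have h2 : ∑ t ∈ Finset.Ico 0 (n+1), (comps k t).card = 2^n := by
      rw [← Finset.range_eq_Ico]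
      exact sum_comps k n (by omega)
    have hle : (2:ℕ)^(n - k/2 - 1) ≤ 2^n := Nat.pow_le_pow_right (by norm_num) (by omega)
    omega
end

section
/- Let B(n,k) denote the number of standard domino tableaux of shape (2n−k, k) for 0 ≤ k ≤ n. Then B(n,k) = binomial(n, ⌊k/2⌋). -/
/-- Cells of the two-row Young diagram `(2n-k, k)`. -/
def dominoDiagram (n k : ℕ) : Set (ℕ × ℕ) :=
  {c | (c.1 = 0 ∧ c.2 < 2 * n - k) ∨ (c.1 = 1 ∧ c.2 < k)}

/-- Two cells are adjacent (can form a domino). -/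
def CellAdjacent (c d : ℕ × ℕ) : Prop :=
  (c.1 = d.1 ∧ (c.2 + 1 = d.2 ∨ d.2 + 1 = c.2)) ∨
  (c.2 = d.2 ∧ (c.1 + 1 = d.1 ∨ d.1 + 1 = c.1))

/-- `T` is a standard domino tableau of shape `(2n-k, k)`: labels `1,…,n`
weakly increase along rows and columns, and each label occupies exactly one
domino (a pair of adjacent cells). -/
def IsDominoTableau (n k : ℕ) (T : ℕ × ℕ → ℕ) : Prop :=
  (∀ c ∉ dominoDiagram n k, T c = 0) ∧
  (∀ c ∈ dominoDiagram n k, 1 ≤ T c ∧ T c ≤ n) ∧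
  (∀ c d : ℕ × ℕ, c ∈ dominoDiagram n k → d ∈ dominoDiagram n k →
    c.1 = d.1 → c.2 ≤ d.2 → T c ≤ T d) ∧
  (∀ c d : ℕ × ℕ, c ∈ dominoDiagram n k → d ∈ dominoDiagram n k →
    c.2 = d.2 → c.1 ≤ d.1 → T c ≤ T d) ∧
  (∀ l : ℕ, 1 ≤ l → l ≤ n → ∃ c d : ℕ × ℕ, c ∈ dominoDiagram n k ∧
    d ∈ dominoDiagram n k ∧ CellAdjacent c d ∧
    {x ∈ dominoDiagram n k | T x = l} = {c, d})

namespace Stmt16Aux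



/-- A downward-closed finset of naturals is an initial segment. -/
lemma dc_range (S : Finset ℕ) (h : ∀ a b : ℕ, a ≤ b → b ∈ S → a ∈ S) :
    ∀ x, x ∈ S ↔ x < S.card := by
  intro x
  constructor
  · intro hx
    by_contra hc
    push_neg at hc
    have hsub : Finset.range (x + 1) ⊆ S := by
      intro a ha
      exact h a x (by simpa using Nat.lt_succ_iff.mp (Finset.mem_range.mp ha)) hx
    have := Finset.card_le_card hsub
    simp [Finset.card_range] at this
    omega
  · intro hx
    by_contra hc
    have hsub : S ⊆ Finset.range x := by
      intro b hb
      simp only [Finset.mem_range]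
      by_contra hbx
      push_neg at hbx
      exact hc (h x b hbx hb)
    have := Finset.card_le_card hsub
    simp [Finset.card_range] at this
    omega

/-- Profiles of the bottom row of a growing domino tableau. -/
def GPath (n k : ℕ) : Set (ℕ → ℕ) :=
  {g | g 0 = 0 ∧ (∀ l, g l ≤ l) ∧ (∀ l, n ≤ l → g l = k) ∧
    ∀ l, g (l + 1) = g l ∨ (g (l + 1) = g l + 1 ∧ g l = l) ∨ g (l + 1) = g l + 2}

lemma GPath.mono {n k : ℕ} {g : ℕ → ℕ} (hg : g ∈ GPath n k) : Monotone g := by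
  apply monotone_nat_of_le_succ
  intro l
  rcases hg.2.2.2 l with h | h | h <;> omega

lemma GPath.finite (n k : ℕ) : (GPath n k).Finite := by
  classical
  set Φ : (ℕ → ℕ) → (Fin (n + 1) → Fin (n + 1)) :=
    fun g i => ⟨min (g i.1) n, by omega⟩ with hΦ
  have hinj : Set.InjOn Φ (GPath n k) := by
    intro g hg g' hg' hgg
    funext l
    by_cases hl : l ≤ n
    · have := congrFun hgg ⟨l, by omega⟩
      simp only [hΦ, Fin.mk.injEq] at this
      have h1 : g l ≤ l := hg.2.1 l
      have h2 : g' l ≤ l := hg'.2.1 l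
      rw [min_eq_left (by omega), min_eq_left (by omega)] at this
      exact this
    · rw [hg.2.2.1 l (by omega), hg'.2.2.1 l (by omega)]
  exact Set.Finite.of_finite_image (Set.toFinite _) hinj

/-- The tail-`k` extension of a path. -/
def extFn (n k : ℕ) (h : ℕ → ℕ) : ℕ → ℕ := fun l => if n + 1 ≤ l then k else h l

lemma extFn_of_le {n l : ℕ} (k : ℕ) (h : ℕ → ℕ) (hl : l ≤ n) : extFn n k h l = h l :=
  if_neg (by omega)

lemma extFn_of_gt {n l : ℕ} (k : ℕ) (h : ℕ → ℕ) (hl : n + 1 ≤ l) : extFn n k h l = k :=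
  if_pos hl

/-- The tail-`k'` truncation of a path. -/
def truncFn (n k' : ℕ) (g : ℕ → ℕ) : ℕ → ℕ := fun l => if n ≤ l then k' else g l

lemma truncFn_of_lt {n l : ℕ} (k' : ℕ) (g : ℕ → ℕ) (hl : l < n) : truncFn n k' g l = g l :=
  if_neg (by omega)

lemma truncFn_of_ge {n l : ℕ} (k' : ℕ) (g : ℕ → ℕ) (hl : n ≤ l) : truncFn n k' g l = k' :=
  if_pos hl

lemma extFn_injOn (n k : ℕ) (S : Set (ℕ → ℕ)) (k' : ℕ) (hS : S ⊆ GPath n k') :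
    Set.InjOn (extFn n k) S := by
  intro h hh h' hh' he
  funext l
  by_cases hl : l ≤ n
  · have := congrFun he l
    rwa [extFn_of_le k h hl, extFn_of_le k h' hl] at this
  · rw [(hS hh).2.2.1 l (by omega), (hS hh').2.2.1 l (by omega)]

lemma extFn_mem (n k k' : ℕ) (hkn : k ≤ n + 1)
    (hstep : k' = k ∨ (k' + 1 = k ∧ k' = n) ∨ k' + 2 = k)
    {h : ℕ → ℕ} (hh : h ∈ GPath n k') : extFn n k h ∈ GPath (n + 1) k := by
  obtain ⟨h0, hle, htail, hs⟩ := hh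
  refine ⟨?_, ?_, ?_, ?_⟩
  · rw [extFn_of_le k h (by omega)]; exact h0
  · intro l
    by_cases hl : n + 1 ≤ l
    · rw [extFn_of_gt k h hl]; omega
    · rw [extFn_of_le k h (by omega)]; exact hle l
  · intro l hl
    exact extFn_of_gt k h hl
  · intro l
    rcases lt_trichotomy l n with hl | hl | hl
    · rw [extFn_of_le k h (by omega), extFn_of_le k h (by omega)]
      exact hs l
    · rw [extFn_of_gt k h (by omega), extFn_of_le k h (by omega), hl, htail n le_rfl]
      rcases hstep with h' | ⟨h1, h2⟩ | h'
      · left; omega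
      · right; left; omega
      · right; right; omega
    · rw [extFn_of_gt k h (by omega), extFn_of_gt k h (by omega)]
      left; rfl

lemma truncFn_mem (n k k' : ℕ) {g : ℕ → ℕ} (hg : g ∈ GPath (n + 1) k)
    (hgn : g n = k') : truncFn n k' g ∈ GPath n k' := by
  obtain ⟨h0, hle, htail, hs⟩ := hg
  refine ⟨?_, ?_, ?_, ?_⟩
  · rcases Nat.eq_zero_or_pos n with hn | hn
    · rw [truncFn_of_ge k' g (by omega), ← hgn, hn, h0]
    · rw [truncFn_of_lt k' g hn]; exact h0
  · intro l
    by_cases hl : n ≤ l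
    · rw [truncFn_of_ge k' g hl]; have := hle n; omega
    · rw [truncFn_of_lt k' g (by omega)]; exact hle l
  · intro l hl
    exact truncFn_of_ge k' g hl
  · intro l
    rcases lt_trichotomy (l + 1) n with hl | hl | hl
    · rw [truncFn_of_lt k' g hl, truncFn_of_lt k' g (by omega)]
      exact hs l
    · rw [truncFn_of_ge k' g (by omega), truncFn_of_lt k' g (by omega), ← hgn, ← hl]
      exact hs l
    · rw [truncFn_of_ge k' g (by omega), truncFn_of_ge k' g (by omega)]
      left; rfl

lemma extFn_truncFn (n k k' : ℕ) {g : ℕ → ℕ} (hg : g ∈ GPath (n + 1) k)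
    (hgn : g n = k') : extFn n k (truncFn n k' g) = g := by
  funext l
  rcases lt_trichotomy l n with hl | hl | hl
  · rw [extFn_of_le k _ (by omega), truncFn_of_lt k' g hl]
  · rw [extFn_of_le k _ (by omega), truncFn_of_ge k' g (by omega), hl, hgn]
  · rw [extFn_of_gt k _ (by omega), hg.2.2.1 l (by omega)]

/-- If a `(n+1)`-path already has value `k` at time `n` it is an `n`-path. -/
lemma mem_of_val_n {n k : ℕ} {g : ℕ → ℕ} (hg : g ∈ GPath (n + 1) k)
    (hgn : g n = k) : g ∈ GPath n k := by
  obtain ⟨h0, hle, htail, hs⟩ := hg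
  refine ⟨h0, hle, fun l hl => ?_, hs⟩
  rcases Nat.eq_or_lt_of_le hl with h | h
  · rw [← h]; exact hgn
  · exact htail l (by omega)

lemma mem_succ {n k : ℕ} {g : ℕ → ℕ} (hg : g ∈ GPath n k) : g ∈ GPath (n + 1) k := by
  obtain ⟨h0, hle, htail, hs⟩ := hg
  exact ⟨h0, hle, fun l hl => htail l (by omega), hs⟩

lemma gpath_zero : GPath 0 0 = {fun _ => 0} := by
  ext g
  constructor
  · intro hg
    funext l
    exact hg.2.2.1 l (by omega)
  · rintro rfl
    exact ⟨rfl, fun l => by simp, fun l _ => rfl, fun l => by left; rfl⟩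

lemma gpath_ncard : ∀ n k : ℕ, k ≤ n → (GPath n k).ncard = n.choose (k / 2) := by
  intro n
  induction n with
  | zero =>
    intro k hk
    interval_cases k
    rw [gpath_zero]
    simp
  | succ n ih =>
    intro k hk
    by_cases hk1 : k ≤ 1 ∧ k ≤ n
    · -- low case: GPath (n+1) k = GPath n k
      obtain ⟨hk1, hkn⟩ := hk1
      have hset : GPath (n + 1) k = GPath n k := by
        ext g
        constructor
        · intro hg
          apply mem_of_val_n hg
          have h1 := hg.2.2.1 (n + 1) le_rfl
          have h2 := hg.2.2.2 n
          have h3 := hg.2.1 n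
          omega
        · exact mem_succ
      rw [hset, ih k hkn]
      interval_cases k <;> simp
    · push_neg at hk1
      by_cases hk2 : k ≤ n
      · -- middle case, 2 ≤ k ≤ n
        have h2k : 2 ≤ k := by
          by_contra h
          exact absurd (hk1 (by omega)) (by omega)
        have hset : GPath (n + 1) k = GPath n k ∪ extFn n k '' GPath n (k - 2) := by
          ext g
          constructor
          · intro hg
            have h2 := hg.2.2.2 n
            have h3 := hg.2.1 n
            have h1 := hg.2.2.1 (n + 1) le_rfl
            rcases h2 with h2 | h2 | h2
            · exact Or.inl (mem_of_val_n hg (by omega))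
            · omega
            · exact Or.inr ⟨truncFn n (k - 2) g, truncFn_mem n k (k - 2) hg (by omega),
                extFn_truncFn n k (k - 2) hg (by omega)⟩
          · intro hg
            rcases hg with hg | ⟨h, hh, rfl⟩
            · exact mem_succ hg
            · exact extFn_mem n k (k - 2) (by omega) (by omega) hh
        have hdisj : Disjoint (GPath n k) (extFn n k '' GPath n (k - 2)) := by
          rw [Set.disjoint_left]
          rintro g hg ⟨h, hh, rfl⟩
          have e1 : extFn n k h n = h n := extFn_of_le k h le_rfl
          have e2 : h n = k - 2 := hh.2.2.1 n le_rfl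
          have e3 : extFn n k h n = k := hg.2.2.1 n le_rfl
          omega
        rw [hset, Set.ncard_union_eq hdisj (GPath.finite n k)
          ((GPath.finite n (k - 2)).image _),
          Set.ncard_image_of_injOn (extFn_injOn n k _ (k - 2) le_rfl),
          ih k hk2, ih (k - 2) (by omega)]
        have e : (k - 2) / 2 = k / 2 - 1 := by omega
        rw [e]
        have h1 : 1 ≤ k / 2 := by omega
        have hP := Nat.choose_succ_succ n (k / 2 - 1)
        simp only [Nat.succ_eq_add_one] at hP
        have e2 : k / 2 - 1 + 1 = k / 2 := by omega
        rw [e2] at hP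
        omega
      · -- k = n + 1
        have hkeq : k = n + 1 := by omega
        subst hkeq
        rcases Nat.eq_zero_or_pos n with hn | hn
        · subst hn
          have hone : GPath 1 1 = {fun l => if 1 ≤ l then 1 else 0} := by
            ext g
            constructor
            · intro hg
              funext l
              by_cases hl : 1 ≤ l
              · rw [if_pos hl]; exact hg.2.2.1 l hl
              · rw [if_neg hl]
                have : l = 0 := by omega
                rw [this]; exact hg.1
            · rintro rfl
              refine ⟨by norm_num, fun l => ?_, fun l hl => by simp [hl], fun l => ?_⟩
              · by_cases hl : 1 ≤ l <;> simp [hl]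
              · by_cases hl : l = 0
                · subst hl; right; left; norm_num
                · left; simp only []
                  rw [if_pos (by omega), if_pos (by omega)]
          rw [hone]
          simp
        · have hset : GPath (n + 1) (n + 1) =
              extFn n (n + 1) '' GPath n n ∪ extFn n (n + 1) '' GPath n (n - 1) := by
            ext g
            constructor
            · intro hg
              have h2 := hg.2.2.2 n
              have h3 := hg.2.1 n
              have h1 := hg.2.2.1 (n + 1) le_rfl
              rcases h2 with h2 | h2 | h2
              · omega
              · exact Or.inl ⟨truncFn n n g, truncFn_mem n (n + 1) n hg (by omega),
                  extFn_truncFn n (n + 1) n hg (by omega)⟩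
              · exact Or.inr ⟨truncFn n (n - 1) g, truncFn_mem n (n + 1) (n - 1) hg (by omega),
                  extFn_truncFn n (n + 1) (n - 1) hg (by omega)⟩
            · intro hg
              rcases hg with ⟨h, hh, rfl⟩ | ⟨h, hh, rfl⟩
              · exact extFn_mem n (n + 1) n le_rfl (by omega) hh
              · exact extFn_mem n (n + 1) (n - 1) le_rfl (by omega) hh
          have hdisj : Disjoint (extFn n (n + 1) '' GPath n n)
              (extFn n (n + 1) '' GPath n (n - 1)) := by
            rw [Set.disjoint_left]
            rintro g ⟨h, hh, rfl⟩ ⟨h', hh', he⟩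
            have e1 : extFn n (n + 1) h n = h n := extFn_of_le _ h le_rfl
            have e2 : h n = n := hh.2.2.1 n le_rfl
            have e3 : h' n = n - 1 := hh'.2.2.1 n le_rfl
            have e4 := congrFun he n
            rw [extFn_of_le _ h' le_rfl] at e4
            omega
          rw [hset, Set.ncard_union_eq hdisj ((GPath.finite n n).image _)
            ((GPath.finite n (n - 1)).image _),
            Set.ncard_image_of_injOn (extFn_injOn n (n + 1) _ n le_rfl),
            Set.ncard_image_of_injOn (extFn_injOn n (n + 1) _ (n - 1) le_rfl),
            ih n le_rfl, ih (n - 1) (by omega)]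
          rcases Nat.even_or_odd n with ⟨s, hs⟩ | ⟨s, hs⟩
          · subst hs
            have h1 : (s + s) / 2 = s := by omega
            have h2 : (s + s - 1) / 2 = s - 1 := by omega
            have h3 : (s + s + 1) / 2 = s := by omega
            rw [h1, h2, h3]
            have hs1 : 1 ≤ s := by omega
            have hP := Nat.choose_succ_succ (s + s) (s - 1)
            simp only [Nat.succ_eq_add_one] at hP
            have e2 : s - 1 + 1 = s := by omega
            rw [e2] at hP
            omega
          · subst hs
            have h1 : (2 * s + 1) / 2 = s := by omega
            have h2 : (2 * s + 1 - 1) / 2 = s := by omega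
            have h3 : (2 * s + 1 + 1) / 2 = s + 1 := by omega
            rw [h1, h2, h3]
            have hP := Nat.choose_succ_succ (2 * s + 1) s
            simp only [Nat.succ_eq_add_one] at hP
            have hsym : (2 * s + 1).choose (s + 1) = (2 * s + 1).choose s := by
              rw [← Nat.choose_symm (by omega : s + 1 ≤ 2 * s + 1)]
              congr 1
              omega
            omega

lemma mem_diag {n k : ℕ} {c : ℕ × ℕ} :
    c ∈ dominoDiagram n k ↔ (c.1 = 0 ∧ c.2 < 2 * n - k) ∨ (c.1 = 1 ∧ c.2 < k) := Iff.rfl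

/-- Number of cells of the bottom row filled by time `l`. -/
def toG (k : ℕ) (T : ℕ × ℕ → ℕ) : ℕ → ℕ :=
  fun l => ((Finset.range k).filter (fun j => T (1, j) ≤ l)).card

/-- Number of cells of the top row filled by time `l`. -/
def r0 (n k : ℕ) (T : ℕ × ℕ → ℕ) : ℕ → ℕ :=
  fun l => ((Finset.range (2 * n - k)).filter (fun j => T (0, j) ≤ l)).card

variable {n k : ℕ} {T : ℕ × ℕ → ℕ}

lemma toG_le (l : ℕ) : toG k T l ≤ k :=
  (Finset.card_filter_le _ _).trans (by simp)

lemma r0_le (l : ℕ) : r0 n k T l ≤ 2 * n - k :=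
  (Finset.card_filter_le _ _).trans (by simp)

lemma prefix1 (hT : IsDominoTableau n k T) (l j : ℕ) (hj : j < k) :
    T (1, j) ≤ l ↔ j < toG k T l := by
  have hdc := dc_range ((Finset.range k).filter (fun j => T (1, j) ≤ l)) ?_
  · have := hdc j
    simp only [Finset.mem_filter, Finset.mem_range] at this
    unfold toG
    omega
  · intro a b hab hb
    simp only [Finset.mem_filter, Finset.mem_range] at hb ⊢
    refine ⟨by omega, le_trans ?_ hb.2⟩
    exact hT.2.2.1 (1, a) (1, b) (mem_diag.mpr (Or.inr ⟨rfl, by omega⟩))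
      (mem_diag.mpr (Or.inr ⟨rfl, hb.1⟩)) rfl hab

lemma prefix0 (hT : IsDominoTableau n k T) (l j : ℕ) (hj : j < 2 * n - k) :
    T (0, j) ≤ l ↔ j < r0 n k T l := by
  have hdc := dc_range ((Finset.range (2 * n - k)).filter (fun j => T (0, j) ≤ l)) ?_
  · have := hdc j
    simp only [Finset.mem_filter, Finset.mem_range] at this
    unfold r0
    omega
  · intro a b hab hb
    simp only [Finset.mem_filter, Finset.mem_range] at hb ⊢
    refine ⟨by omega, le_trans ?_ hb.2⟩
    exact hT.2.2.1 (0, a) (0, b) (mem_diag.mpr (Or.inl ⟨rfl, by omega⟩))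
      (mem_diag.mpr (Or.inl ⟨rfl, hb.1⟩)) rfl hab

lemma filter_succ_card (m : ℕ) (f : ℕ → ℕ) (l : ℕ) :
    ((Finset.range m).filter (fun j => f j ≤ l + 1)).card
    = ((Finset.range m).filter (fun j => f j ≤ l)).card
      + ((Finset.range m).filter (fun j => f j = l + 1)).card := by
  rw [← Finset.card_union_of_disjoint ?_]
  · congr 1
    ext j
    simp only [Finset.mem_union, Finset.mem_filter, Finset.mem_range]
    omega
  · rw [Finset.disjoint_left]
    intro a ha hb
    simp only [Finset.mem_filter] at ha hb
    omega

lemma adj_ne {c d : ℕ × ℕ} (h : CellAdjacent c d) : c ≠ d := by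
  intro he
  subst he
  rcases h with ⟨_, h | h⟩ | ⟨_, h | h⟩ <;> omega

/-- Core analysis of the domino with label `l`. -/
lemma level_split (hT : IsDominoTableau n k T) (l : ℕ) (hl1 : 1 ≤ l) (hl2 : l ≤ n) :
    ((Finset.range (2 * n - k)).filter (fun j => T (0, j) = l)).card
      + ((Finset.range k).filter (fun j => T (1, j) = l)).card = 2
    ∧ (((Finset.range k).filter (fun j => T (1, j) = l)).card = 1 →
        toG k T (l - 1) = r0 n k T (l - 1)) := by
  classical
  obtain ⟨c, d, hc, hd, hadj, hlev⟩ := hT.2.2.2.2 l hl1 hl2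
  have hne : c ≠ d := adj_ne hadj
  have hmem : ∀ x : ℕ × ℕ, (x ∈ dominoDiagram n k ∧ T x = l) ↔ (x = c ∨ x = d) := by
    intro x
    have := Set.ext_iff.mp hlev x
    simpa [Set.mem_setOf_eq] using this
  -- helper for the mixed (vertical domino) case
  have mixed : ∀ a b : ℕ × ℕ, a ∈ dominoDiagram n k → b ∈ dominoDiagram n k →
      a.1 = 0 → b.1 = 1 → a.2 = b.2 →
      (∀ x : ℕ × ℕ, (x ∈ dominoDiagram n k ∧ T x = l) ↔ (x = a ∨ x = b)) →
      ((Finset.range (2 * n - k)).filter (fun j => T (0, j) = l)).card = 1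
      ∧ ((Finset.range k).filter (fun j => T (1, j) = l)).card = 1
      ∧ toG k T (l - 1) = r0 n k T (l - 1) := by
    intro a b ha hb ha0 hb1 hab hm
    have hak : a.2 < 2 * n - k := by
      rcases mem_diag.mp ha with ⟨_, h⟩ | ⟨h, _⟩ <;> omega
    have hbk : b.2 < k := by
      rcases mem_diag.mp hb with ⟨h, _⟩ | ⟨_, h⟩ <;> omega
    have hTa : T a = l := ((hm a).mpr (Or.inl rfl)).2
    have hTb : T b = l := ((hm b).mpr (Or.inr rfl)).2
    have hD0 : (Finset.range (2 * n - k)).filter (fun j => T (0, j) = l) = {a.2} := by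
      ext j
      simp only [Finset.mem_filter, Finset.mem_range, Finset.mem_singleton]
      constructor
      · rintro ⟨hj, hTj⟩
        have := (hm (0, j)).mp ⟨mem_diag.mpr (Or.inl ⟨rfl, hj⟩), hTj⟩
        rcases this with h | h
        · rw [← h]
        · exfalso
          have := congrArg Prod.fst h
          simp [hb1] at this
      · rintro rfl
        have : (0, a.2) = a := Prod.ext (by simp [ha0]) rfl
        exact ⟨hak, by rw [this]; exact hTa⟩
    have hD1 : (Finset.range k).filter (fun j => T (1, j) = l) = {b.2} := by
      ext j
      simp only [Finset.mem_filter, Finset.mem_range, Finset.mem_singleton]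
      constructor
      · rintro ⟨hj, hTj⟩
        have := (hm (1, j)).mp ⟨mem_diag.mpr (Or.inr ⟨rfl, hj⟩), hTj⟩
        rcases this with h | h
        · exfalso
          have := congrArg Prod.fst h
          simp [ha0] at this
        · rw [← h]
      · rintro rfl
        have : (1, b.2) = b := Prod.ext (by simp [hb1]) rfl
        exact ⟨hbk, by rw [this]; exact hTb⟩
    refine ⟨by rw [hD0]; simp, by rw [hD1]; simp, ?_⟩
    -- toG (l-1) = b.2 = a.2 = r0 (l-1)
    have hg1 : toG k T (l - 1) = b.2 := by
      have hup : toG k T (l - 1) ≤ b.2 := by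
        by_contra hcon
        push_neg at hcon
        have := (prefix1 hT (l - 1) b.2 hbk).mpr hcon
        rw [show (1, b.2) = b from Prod.ext (by simp [hb1]) rfl] at this
        omega
      have hdown : ∀ j' : ℕ, j' < b.2 → j' < toG k T (l - 1) := by
        intro j' hj'
        rw [← prefix1 hT (l - 1) j' (by omega)]
        have hle : T (1, j') ≤ T (1, b.2) := hT.2.2.1 (1, j') (1, b.2)
          (mem_diag.mpr (Or.inr ⟨rfl, by omega⟩)) (mem_diag.mpr (Or.inr ⟨rfl, hbk⟩))
          rfl (by omega)
        rw [show (1, b.2) = b from Prod.ext (by simp [hb1]) rfl, hTb] at hle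
        have hne' : T (1, j') ≠ l := by
          intro hcon
          have := (hm (1, j')).mp ⟨mem_diag.mpr (Or.inr ⟨rfl, by omega⟩), hcon⟩
          rcases this with h | h
          · have := congrArg Prod.fst h; simp [ha0] at this
          · have := congrArg Prod.snd h; simp at this; omega
        omega
      by_cases hb0 : b.2 = 0
      · omega
      · have := hdown (b.2 - 1) (by omega)
        omega
    have hg0 : r0 n k T (l - 1) = a.2 := by
      have hup : r0 n k T (l - 1) ≤ a.2 := by
        by_contra hcon
        push_neg at hcon
        have := (prefix0 hT (l - 1) a.2 hak).mpr hcon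
        rw [show (0, a.2) = a from Prod.ext (by simp [ha0]) rfl] at this
        omega
      have hdown : ∀ j' : ℕ, j' < a.2 → j' < r0 n k T (l - 1) := by
        intro j' hj'
        rw [← prefix0 hT (l - 1) j' (by omega)]
        have hle : T (0, j') ≤ T (0, a.2) := hT.2.2.1 (0, j') (0, a.2)
          (mem_diag.mpr (Or.inl ⟨rfl, by omega⟩)) (mem_diag.mpr (Or.inl ⟨rfl, hak⟩))
          rfl (by omega)
        rw [show (0, a.2) = a from Prod.ext (by simp [ha0]) rfl, hTa] at hle
        have hne' : T (0, j') ≠ l := by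
          intro hcon
          have := (hm (0, j')).mp ⟨mem_diag.mpr (Or.inl ⟨rfl, by omega⟩), hcon⟩
          rcases this with h | h
          · have := congrArg Prod.snd h; simp at this; omega
          · have := congrArg Prod.fst h; simp [hb1] at this
        omega
      by_cases ha0' : a.2 = 0
      · omega
      · have := hdown (a.2 - 1) (by omega)
        omega
    omega
  -- now the case analysis on the rows of c and d
  have hc01 : c.1 = 0 ∨ c.1 = 1 := by rcases mem_diag.mp hc with ⟨h, _⟩ | ⟨h, _⟩ <;> omega
  have hd01 : d.1 = 0 ∨ d.1 = 1 := by rcases mem_diag.mp hd with ⟨h, _⟩ | ⟨h, _⟩ <;> omega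
  rcases hc01 with hc0 | hc1 <;> rcases hd01 with hd0 | hd1
  · -- both on row 0 : horizontal domino on top row
    have hck : c.2 < 2 * n - k := by rcases mem_diag.mp hc with ⟨_, h⟩ | ⟨h, _⟩ <;> omega
    have hdk : d.2 < 2 * n - k := by rcases mem_diag.mp hd with ⟨_, h⟩ | ⟨h, _⟩ <;> omega
    have hcd2 : c.2 ≠ d.2 := by
      intro h
      exact hne (Prod.ext (by omega) h)
    have hD0 : (Finset.range (2 * n - k)).filter (fun j => T (0, j) = l) = {c.2, d.2} := by
      ext j
      simp only [Finset.mem_filter, Finset.mem_range, Finset.mem_insert, Finset.mem_singleton]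
      constructor
      · rintro ⟨hj, hTj⟩
        have := (hmem (0, j)).mp ⟨mem_diag.mpr (Or.inl ⟨rfl, hj⟩), hTj⟩
        rcases this with h | h
        · left; rw [← h]
        · right; rw [← h]
      · rintro (rfl | rfl)
        · have he : (0, c.2) = c := Prod.ext (by simp [hc0]) rfl
          exact ⟨hck, by rw [he]; exact ((hmem c).mpr (Or.inl rfl)).2⟩
        · have he : (0, d.2) = d := Prod.ext (by simp [hd0]) rfl
          exact ⟨hdk, by rw [he]; exact ((hmem d).mpr (Or.inr rfl)).2⟩
    have hD1 : (Finset.range k).filter (fun j => T (1, j) = l) = ∅ := by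
      rw [Finset.filter_eq_empty_iff]
      intro j hj hTj
      have := (hmem (1, j)).mp ⟨mem_diag.mpr (Or.inr ⟨rfl, Finset.mem_range.mp hj⟩), hTj⟩
      rcases this with h | h
      · have := congrArg Prod.fst h; simp [hc0] at this
      · have := congrArg Prod.fst h; simp [hd0] at this
    rw [hD0, hD1]
    constructor
    · rw [Finset.card_insert_of_notMem (by simpa using hcd2)]
      simp
    · simp
  · -- c on row 0, d on row 1 : vertical domino
    have hcd2 : c.2 = d.2 := by
      rcases hadj with ⟨h, _⟩ | ⟨h, _⟩
      · omega
      · exact h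
    obtain ⟨e0, e1, e2⟩ := mixed c d hc hd hc0 hd1 hcd2 hmem
    rw [e0, e1]
    exact ⟨rfl, fun _ => e2⟩
  · -- c on row 1, d on row 0 : vertical domino (swapped)
    have hcd2 : d.2 = c.2 := by
      rcases hadj with ⟨h, _⟩ | ⟨h, _⟩
      · omega
      · omega
    have hmem' : ∀ x : ℕ × ℕ, (x ∈ dominoDiagram n k ∧ T x = l) ↔ (x = d ∨ x = c) := by
      intro x
      rw [hmem x]
      tauto
    obtain ⟨e0, e1, e2⟩ := mixed d c hd hc hd0 hc1 hcd2 hmem'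
    rw [e0, e1]
    exact ⟨rfl, fun _ => e2⟩
  · -- both on row 1 : horizontal domino on bottom row
    have hck : c.2 < k := by rcases mem_diag.mp hc with ⟨h, _⟩ | ⟨_, h⟩ <;> omega
    have hdk : d.2 < k := by rcases mem_diag.mp hd with ⟨h, _⟩ | ⟨_, h⟩ <;> omega
    have hcd2 : c.2 ≠ d.2 := by
      intro h
      exact hne (Prod.ext (by omega) h)
    have hD1 : (Finset.range k).filter (fun j => T (1, j) = l) = {c.2, d.2} := by
      ext j
      simp only [Finset.mem_filter, Finset.mem_range, Finset.mem_insert, Finset.mem_singleton]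
      constructor
      · rintro ⟨hj, hTj⟩
        have := (hmem (1, j)).mp ⟨mem_diag.mpr (Or.inr ⟨rfl, hj⟩), hTj⟩
        rcases this with h | h
        · left; rw [← h]
        · right; rw [← h]
      · rintro (rfl | rfl)
        · have he : (1, c.2) = c := Prod.ext (by simp [hc1]) rfl
          exact ⟨hck, by rw [he]; exact ((hmem c).mpr (Or.inl rfl)).2⟩
        · have he : (1, d.2) = d := Prod.ext (by simp [hd1]) rfl
          exact ⟨hdk, by rw [he]; exact ((hmem d).mpr (Or.inr rfl)).2⟩
    have hD0 : (Finset.range (2 * n - k)).filter (fun j => T (0, j) = l) = ∅ := by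
      rw [Finset.filter_eq_empty_iff]
      intro j hj hTj
      have := (hmem (0, j)).mp ⟨mem_diag.mpr (Or.inl ⟨rfl, Finset.mem_range.mp hj⟩), hTj⟩
      rcases this with h | h
      · have := congrArg Prod.fst h; simp [hc1] at this
      · have := congrArg Prod.fst h; simp [hd1] at this
    rw [hD0, hD1]
    constructor
    · rw [Finset.card_insert_of_notMem (by simpa using hcd2)]
      simp
    · intro h
      rw [Finset.card_insert_of_notMem (by simpa using hcd2)] at h
      simp at h


lemma count_lemma (hT : IsDominoTableau n k T) :
    ∀ l, l ≤ n → r0 n k T l + toG k T l = 2 * l := by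
  intro l
  induction l with
  | zero =>
    intro _
    have h0 : r0 n k T 0 = 0 := by
      unfold r0
      rw [Finset.card_eq_zero, Finset.filter_eq_empty_iff]
      intro j hj hTj
      have := hT.2.1 (0, j) (mem_diag.mpr (Or.inl ⟨rfl, Finset.mem_range.mp hj⟩))
      omega
    have h1 : toG k T 0 = 0 := by
      unfold toG
      rw [Finset.card_eq_zero, Finset.filter_eq_empty_iff]
      intro j hj hTj
      have := hT.2.1 (1, j) (mem_diag.mpr (Or.inr ⟨rfl, Finset.mem_range.mp hj⟩))
      omega
    omega
  | succ l ih =>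
    intro hl
    have hsplit := (level_split hT (l + 1) (by omega) hl).1
    have e0 : r0 n k T (l + 1)
        = r0 n k T l + ((Finset.range (2 * n - k)).filter (fun j => T (0, j) = l + 1)).card :=
      filter_succ_card _ _ l
    have e1 : toG k T (l + 1)
        = toG k T l + ((Finset.range k).filter (fun j => T (1, j) = l + 1)).card :=
      filter_succ_card _ _ l
    have := ih (by omega)
    omega

lemma col_le (hT : IsDominoTableau n k T) (hk : k ≤ n) (l : ℕ) :
    toG k T l ≤ r0 n k T l := by
  have key : ∀ j, j < toG k T l → j < r0 n k T l := by
    intro j hj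
    have hjk : j < k := lt_of_lt_of_le hj (toG_le l)
    have h1 : T (1, j) ≤ l := (prefix1 hT l j hjk).mpr hj
    have h0 : T (0, j) ≤ T (1, j) := hT.2.2.2.1 (0, j) (1, j)
      (mem_diag.mpr (Or.inl ⟨rfl, by omega⟩)) (mem_diag.mpr (Or.inr ⟨rfl, hjk⟩))
      rfl (by omega)
    exact (prefix0 hT l j (by omega)).mp (le_trans h0 h1)
  by_cases h : toG k T l = 0
  · omega
  · have := key (toG k T l - 1) (by omega)
    omega

lemma toG_tail (hT : IsDominoTableau n k T) : ∀ l, n ≤ l → toG k T l = k := by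
  intro l hl
  unfold toG
  rw [Finset.filter_true_of_mem, Finset.card_range]
  intro j hj
  have := hT.2.1 (1, j) (mem_diag.mpr (Or.inr ⟨rfl, Finset.mem_range.mp hj⟩))
  omega

lemma toG_mem (hT : IsDominoTableau n k T) (hk : k ≤ n) : toG k T ∈ GPath n k := by
  refine ⟨?_, ?_, toG_tail hT, ?_⟩
  · have := count_lemma hT 0 (by omega)
    omega
  · intro l
    by_cases hl : l ≤ n
    · have h1 := count_lemma hT l hl
      have h2 := col_le hT hk l
      omega
    · have := toG_tail hT l (by omega)
      omega
  · intro l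
    by_cases hl : l < n
    · have e1 : toG k T (l + 1)
          = toG k T l + ((Finset.range k).filter (fun j => T (1, j) = l + 1)).card :=
        filter_succ_card _ _ l
      obtain ⟨hsum, hmid⟩ := level_split hT (l + 1) (by omega) (by omega)
      simp only [Nat.add_sub_cancel] at hmid
      set b := ((Finset.range k).filter (fun j => T (1, j) = l + 1)).card with hb
      have hble : b ≤ 2 := by omega
      interval_cases b
      · left; omega
      · right; left
        refine ⟨by omega, ?_⟩
        have := hmid rfl
        have := count_lemma hT l (by omega)
        omega
      · right; right; omega
    · have h1 := toG_tail hT l (by omega)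
      have h2 := toG_tail hT (l + 1) (by omega)
      omega

lemma toG_injOn (hk : k ≤ n) :
    Set.InjOn (toG k) {T : ℕ × ℕ → ℕ | IsDominoTableau n k T} := by
  intro T hT T' hT' he
  have hT : IsDominoTableau n k T := hT
  have hT' : IsDominoTableau n k T' := hT'
  funext c
  obtain ⟨i, j⟩ := c
  by_cases hc : (i, j) ∈ dominoDiagram n k
  · rcases mem_diag.mp hc with ⟨h1, h2⟩ | ⟨h1, h2⟩
  -- row 0
    · simp only at h1 h2
      subst h1
      have hrel : ∀ l, l ≤ n → (T (0, j) ≤ l ↔ T' (0, j) ≤ l) := by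
        intro l hl
        rw [prefix0 hT l j h2, prefix0 hT' l j h2]
        have e1 := count_lemma hT l hl
        have e2 := count_lemma hT' l hl
        have e3 := congrFun he l
        simp only [toG] at e3
        simp only [toG] at e1 e2
        omega
      have hb := hT.2.1 (0, j) hc
      have hb' := hT'.2.1 (0, j) hc
      have k1 := (hrel (T (0, j)) hb.2).mp le_rfl
      have k2 := (hrel (T' (0, j)) hb'.2).mpr le_rfl
      omega
    · simp only at h1 h2
      subst h1
      have hrel : ∀ l, (T (1, j) ≤ l ↔ T' (1, j) ≤ l) := by
        intro l
        rw [prefix1 hT l j h2, prefix1 hT' l j h2, congrFun he l]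
      have hb := hT.2.1 (1, j) hc
      have hb' := hT'.2.1 (1, j) hc
      have k1 := (hrel (T (1, j))).mp le_rfl
      have k2 := (hrel (T' (1, j))).mpr le_rfl
      omega
  · rw [hT.1 _ hc, hT'.1 _ hc]

/-- Top-row profile determined by a path. -/
def fOf (g : ℕ → ℕ) : ℕ → ℕ := fun l => 2 * l - g l

/-- The tableau built from a path. -/
def toT (n k : ℕ) (g : ℕ → ℕ) : ℕ × ℕ → ℕ := fun c =>
  if c.1 = 0 ∧ c.2 < 2 * n - k then ((Finset.range n).filter (fun l => fOf g l ≤ c.2)).card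
  else if c.1 = 1 ∧ c.2 < k then ((Finset.range n).filter (fun l => g l ≤ c.2)).card
  else 0

variable {g : ℕ → ℕ}

lemma GPath.mono' (hg : g ∈ GPath n k) : Monotone g := by
  apply monotone_nat_of_le_succ
  intro l
  rcases hg.2.2.2 l with h | h | h <;> omega

lemma f_mono (hg : g ∈ GPath n k) : Monotone (fOf g) := by
  apply monotone_nat_of_le_succ
  intro l
  have h1 := hg.2.1 l
  have h2 := hg.2.1 (l + 1)
  unfold fOf
  rcases hg.2.2.2 l with h | h | h <;> omega

lemma g_le_k (hg : g ∈ GPath n k) : ∀ l, g l ≤ k := by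
  intro l
  rcases le_or_gt n l with h | h
  · exact le_of_eq (hg.2.2.1 l h)
  · rw [← hg.2.2.1 n le_rfl]
    exact GPath.mono' hg (by omega)

lemma f_n (hg : g ∈ GPath n k) : fOf g n = 2 * n - k := by
  unfold fOf
  rw [hg.2.2.1 n le_rfl]

lemma f_le (hg : g ∈ GPath n k) : ∀ l, l ≤ n → fOf g l ≤ 2 * n - k := by
  intro l hl
  rw [← f_n hg]
  exact f_mono hg hl

lemma toT_row0 (hj : j < 2 * n - k) :
    toT n k g (0, j) = ((Finset.range n).filter (fun l => fOf g l ≤ j)).card := by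
  unfold toT
  rw [if_pos ⟨rfl, hj⟩]

lemma toT_row1 (hj : j < k) :
    toT n k g (1, j) = ((Finset.range n).filter (fun l => g l ≤ j)).card := by
  unfold toT
  rw [if_neg (by simp), if_pos ⟨rfl, hj⟩]

lemma char1 (hg : g ∈ GPath n k) {j : ℕ} (hj : j < k) :
    ∀ l, l ≤ n → (toT n k g (1, j) ≤ l ↔ j < g l) := by
  intro l hl
  rw [toT_row1 hj]
  have hdc := dc_range ((Finset.range n).filter (fun l => g l ≤ j)) ?_
  · rcases eq_or_lt_of_le hl with rfl | hl'
    · have hcard : ((Finset.range l).filter (fun l' => g l' ≤ j)).card ≤ l :=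
        (Finset.card_filter_le _ _).trans (by simp)
      have := hg.2.2.1 l le_rfl
      constructor
      · intro _; omega
      · intro _; exact hcard
    · have := hdc l
      simp only [Finset.mem_filter, Finset.mem_range] at this
      omega
  · intro a b hab hb
    simp only [Finset.mem_filter, Finset.mem_range] at hb ⊢
    exact ⟨by omega, le_trans (GPath.mono' hg hab) hb.2⟩

lemma char0 (hg : g ∈ GPath n k) (hk : k ≤ n) {j : ℕ} (hj : j < 2 * n - k) :
    ∀ l, l ≤ n → (toT n k g (0, j) ≤ l ↔ j < fOf g l) := by
  intro l hl
  rw [toT_row0 hj]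
  have hdc := dc_range ((Finset.range n).filter (fun l => fOf g l ≤ j)) ?_
  · rcases eq_or_lt_of_le hl with rfl | hl'
    · have hcard : ((Finset.range l).filter (fun l' => fOf g l' ≤ j)).card ≤ l :=
        (Finset.card_filter_le _ _).trans (by simp)
      have := f_n hg
      constructor
      · intro _; omega
      · intro _; exact hcard
    · have := hdc l
      simp only [Finset.mem_filter, Finset.mem_range] at this
      omega
  · intro a b hab hb
    simp only [Finset.mem_filter, Finset.mem_range] at hb ⊢
    exact ⟨by omega, le_trans (f_mono hg hab) hb.2⟩

lemma toT_bounds (hg : g ∈ GPath n k) (hk : k ≤ n) :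
    ∀ c ∈ dominoDiagram n k, 1 ≤ toT n k g c ∧ toT n k g c ≤ n := by
  rintro ⟨i, j⟩ hc
  have hn : 1 ≤ n := by
    rcases mem_diag.mp hc with ⟨_, h⟩ | ⟨_, h⟩ <;> omega
  rcases mem_diag.mp hc with ⟨h1, h2⟩ | ⟨h1, h2⟩ <;> simp only at h1 h2 <;> subst h1
  · rw [toT_row0 h2]
    constructor
    · rw [Nat.one_le_iff_ne_zero, ← Nat.pos_iff_ne_zero, Finset.card_pos]
      refine ⟨0, ?_⟩
      simp only [Finset.mem_filter, Finset.mem_range]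
      refine ⟨by omega, ?_⟩
      have : g 0 = 0 := hg.1
      unfold fOf
      omega
    · exact (Finset.card_filter_le _ _).trans (by simp)
  · rw [toT_row1 h2]
    constructor
    · rw [Nat.one_le_iff_ne_zero, ← Nat.pos_iff_ne_zero, Finset.card_pos]
      refine ⟨0, ?_⟩
      simp only [Finset.mem_filter, Finset.mem_range]
      exact ⟨by omega, by rw [hg.1]; omega⟩
    · exact (Finset.card_filter_le _ _).trans (by simp)

lemma charEq1 (hg : g ∈ GPath n k) (hk : k ≤ n) {j m : ℕ} (hj : j < k) (hm : m < n) :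
    (toT n k g (1, j) = m + 1 ↔ (g m ≤ j ∧ j < g (m + 1))) := by
  have c1 := char1 hg hj m (by omega)
  have c2 := char1 hg hj (m + 1) (by omega)
  have hb := toT_bounds hg hk (1, j) (mem_diag.mpr (Or.inr ⟨rfl, hj⟩))
  omega

lemma charEq0 (hg : g ∈ GPath n k) (hk : k ≤ n) {j m : ℕ} (hj : j < 2 * n - k) (hm : m < n) :
    (toT n k g (0, j) = m + 1 ↔ (fOf g m ≤ j ∧ j < fOf g (m + 1))) := by
  have c1 := char0 hg hk hj m (by omega)
  have c2 := char0 hg hk hj (m + 1) (by omega)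
  have hb := toT_bounds hg hk (0, j) (mem_diag.mpr (Or.inl ⟨rfl, hj⟩))
  omega

lemma toT_tableau (hg : g ∈ GPath n k) (hk : k ≤ n) : IsDominoTableau n k (toT n k g) := by
  refine ⟨?_, toT_bounds hg hk, ?_, ?_, ?_⟩
  · -- outside the diagram
    intro c hc
    have h' : ¬((c.1 = 0 ∧ c.2 < 2 * n - k) ∨ (c.1 = 1 ∧ c.2 < k)) := hc
    unfold toT
    rw [if_neg (by tauto), if_neg (by tauto)]
  · -- rows weakly increase
    rintro ⟨i, j⟩ ⟨i', j'⟩ hc hd h1 h2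
    simp only at h1 h2
    subst h1
    rcases mem_diag.mp hc with ⟨h1, hj⟩ | ⟨h1, hj⟩ <;> simp only at h1 <;> subst h1
    · have hj' : j' < 2 * n - k := by
        rcases mem_diag.mp hd with ⟨_, h⟩ | ⟨h, _⟩ <;> omega
      rw [toT_row0 hj, toT_row0 hj']
      apply Finset.card_le_card
      intro a ha
      simp only [Finset.mem_filter, Finset.mem_range] at ha ⊢
      exact ⟨ha.1, by omega⟩
    · have hj' : j' < k := by
        rcases mem_diag.mp hd with ⟨h, _⟩ | ⟨_, h⟩ <;> omega
      rw [toT_row1 hj, toT_row1 hj']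
      apply Finset.card_le_card
      intro a ha
      simp only [Finset.mem_filter, Finset.mem_range] at ha ⊢
      exact ⟨ha.1, by omega⟩
  · -- columns weakly increase
    rintro ⟨i, j⟩ ⟨i', j'⟩ hc hd h1 h2
    simp only at h1 h2
    subst h1
    rcases mem_diag.mp hc with ⟨h1, hj⟩ | ⟨h1, hj⟩ <;>
      rcases mem_diag.mp hd with ⟨h1', hj'⟩ | ⟨h1', hj'⟩ <;> simp only at h1 h1' <;>
      subst h1 <;> subst h1'
    · exact le_rfl
    · rw [toT_row0 hj, toT_row1 hj']
      apply Finset.card_le_card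
      intro a ha
      simp only [Finset.mem_filter, Finset.mem_range] at ha ⊢
      refine ⟨ha.1, le_trans ?_ ha.2⟩
      have := hg.2.1 a
      unfold fOf
      omega
    · omega
    · exact le_rfl
  · -- dominoes
    intro L hL1 hL2
    obtain ⟨m, rfl⟩ : ∃ m, L = m + 1 := ⟨L - 1, by omega⟩
    have hm : m < n := by omega
    rcases hg.2.2.2 m with hstep | ⟨hstep, hdiag⟩ | hstep
    · -- horizontal domino in top row
      have hf : fOf g (m + 1) = fOf g m + 2 := by
        have h1 := hg.2.1 m
        have h2 := hg.2.1 (m + 1)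
        unfold fOf
        omega
      have hfb : fOf g m + 1 < 2 * n - k := by
        have := f_le hg (m + 1) (by omega)
        omega
      refine ⟨(0, fOf g m), (0, fOf g m + 1),
        mem_diag.mpr (Or.inl ⟨rfl, by omega⟩), mem_diag.mpr (Or.inl ⟨rfl, hfb⟩),
        Or.inl ⟨rfl, Or.inl rfl⟩, ?_⟩
      ext ⟨i, j⟩
      simp only [Set.mem_setOf_eq, Set.mem_insert_iff, Set.mem_singleton_iff,
        Prod.mk.injEq]
      constructor
      · rintro ⟨hd, hTv⟩
        rcases mem_diag.mp hd with ⟨h1, hj⟩ | ⟨h1, hj⟩ <;> simp only at h1 <;> subst h1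
        · have := (charEq0 hg hk hj hm).mp hTv
          omega
        · have := (charEq1 hg hk hj hm).mp hTv
          omega
      · rintro (⟨rfl, rfl⟩ | ⟨rfl, rfl⟩)
        · exact ⟨mem_diag.mpr (Or.inl ⟨rfl, by omega⟩),
            (charEq0 hg hk (by omega) hm).mpr (by omega)⟩
        · exact ⟨mem_diag.mpr (Or.inl ⟨rfl, hfb⟩),
            (charEq0 hg hk hfb hm).mpr (by omega)⟩
    · -- vertical domino
      have hfm : fOf g m = m := by
        unfold fOf
        omega
      have hf : fOf g (m + 1) = m + 1 := by
        unfold fOf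
        omega
      have hmb0 : m < 2 * n - k := by
        have := f_le hg (m + 1) (by omega)
        omega
      have hmb1 : m < k := by
        have := g_le_k hg (m + 1)
        omega
      refine ⟨(0, m), (1, m),
        mem_diag.mpr (Or.inl ⟨rfl, hmb0⟩), mem_diag.mpr (Or.inr ⟨rfl, hmb1⟩),
        Or.inr ⟨rfl, Or.inl rfl⟩, ?_⟩
      ext ⟨i, j⟩
      simp only [Set.mem_setOf_eq, Set.mem_insert_iff, Set.mem_singleton_iff,
        Prod.mk.injEq]
      constructor
      · rintro ⟨hd, hTv⟩
        rcases mem_diag.mp hd with ⟨h1, hj⟩ | ⟨h1, hj⟩ <;> simp only at h1 <;> subst h1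
        · have := (charEq0 hg hk hj hm).mp hTv
          omega
        · have := (charEq1 hg hk hj hm).mp hTv
          omega
      · rintro (⟨rfl, rfl⟩ | ⟨rfl, rfl⟩)
        · exact ⟨mem_diag.mpr (Or.inl ⟨rfl, hmb0⟩),
            (charEq0 hg hk hmb0 hm).mpr (by omega)⟩
        · exact ⟨mem_diag.mpr (Or.inr ⟨rfl, hmb1⟩),
            (charEq1 hg hk hmb1 hm).mpr (by omega)⟩
    · -- horizontal domino in bottom row
      have hgb : g m + 1 < k := by
        have := g_le_k hg (m + 1)
        omega
      have hf : fOf g (m + 1) = fOf g m := by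
        have h1 := hg.2.1 m
        have h2 := hg.2.1 (m + 1)
        unfold fOf
        omega
      refine ⟨(1, g m), (1, g m + 1),
        mem_diag.mpr (Or.inr ⟨rfl, by omega⟩), mem_diag.mpr (Or.inr ⟨rfl, hgb⟩),
        Or.inl ⟨rfl, Or.inl rfl⟩, ?_⟩
      ext ⟨i, j⟩
      simp only [Set.mem_setOf_eq, Set.mem_insert_iff, Set.mem_singleton_iff,
        Prod.mk.injEq]
      constructor
      · rintro ⟨hd, hTv⟩
        rcases mem_diag.mp hd with ⟨h1, hj⟩ | ⟨h1, hj⟩ <;> simp only at h1 <;> subst h1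
        · have := (charEq0 hg hk hj hm).mp hTv
          omega
        · have := (charEq1 hg hk hj hm).mp hTv
          omega
      · rintro (⟨rfl, rfl⟩ | ⟨rfl, rfl⟩)
        · exact ⟨mem_diag.mpr (Or.inr ⟨rfl, by omega⟩),
            (charEq1 hg hk (by omega) hm).mpr (by omega)⟩
        · exact ⟨mem_diag.mpr (Or.inr ⟨rfl, hgb⟩),
            (charEq1 hg hk hgb hm).mpr (by omega)⟩

lemma toG_toT (hg : g ∈ GPath n k) (hk : k ≤ n) : toG k (toT n k g) = g := by
  funext l
  unfold toG
  by_cases hl : l ≤ n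
  · have he : (Finset.range k).filter (fun j => toT n k g (1, j) ≤ l)
        = Finset.range (g l) := by
      ext j
      simp only [Finset.mem_filter, Finset.mem_range]
      constructor
      · rintro ⟨hj, hTj⟩
        exact (char1 hg hj l hl).mp hTj
      · intro hj
        have hjk : j < k := lt_of_lt_of_le hj (g_le_k hg l)
        exact ⟨hjk, (char1 hg hjk l hl).mpr hj⟩
    rw [he, Finset.card_range]
  · rw [Finset.filter_true_of_mem, Finset.card_range, hg.2.2.1 l (by omega)]
    intro j hj
    have := (toT_bounds hg hk (1, j)
      (mem_diag.mpr (Or.inr ⟨rfl, Finset.mem_range.mp hj⟩))).2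
    omega


end Stmt16Aux

/-- The number of standard domino tableaux of shape `(2n-k, k)` is
`n.choose ⌊k/2⌋`. -/
theorem stmt16 (n k : ℕ) (hk : k ≤ n) :
    Set.ncard {T : ℕ × ℕ → ℕ | IsDominoTableau n k T} = n.choose (k / 2) := by
  classical
  have himg : Stmt16Aux.toG k '' {T : ℕ × ℕ → ℕ | IsDominoTableau n k T}
      = Stmt16Aux.GPath n k := by
    apply Set.Subset.antisymm
    · rintro g ⟨T, hT, rfl⟩
      exact Stmt16Aux.toG_mem hT hk
    · intro g hg
      exact ⟨Stmt16Aux.toT n k g, Stmt16Aux.toT_tableau hg hk, Stmt16Aux.toG_toT hg hk⟩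
  rw [← Set.ncard_image_of_injOn (Stmt16Aux.toG_injOn hk), himg,
    Stmt16Aux.gpath_ncard n k hk]
end
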